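/- arXiv:1406.1054 — 2 statements merged into one kernel-verified Lean document; each statement's English description precedes it below -/
import Mathlib

section
/- Let F be a one-dimensional commutative formal group law over a commutative ring R, with a₁₁, a₁₂, a₁₃, a₂₂ the coefficients of xy, x²y, x³y, x²y² in F, let ι be the formal inverse of F, and let r ∈ R[[x,y]] be the unique series with F(x,y) = y + x·r(x,y). Then the series r(x -_F y, y) and 1 + a₁₁y + a₁₂xy + (a₂₂ - a₁₂a₁₁)(x - y)y² + a₁₃y((x - y)² + y²) have equal coefficients in all total degrees < 4. -/
/-!
Formal group law preliminaries: substitution of (multivariate) formal power series,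
the definition of a one-dimensional commutative formal group law, its formal inverse,
and the formal difference `x -_F y := F(x, ι(y))`.
-/

noncomputable section

open MvPowerSeries

/-- Substitution `f(a 0, a 1, …)` of multivariate power series (the intended use is when
each `a i` has zero constant coefficient): the coefficient at `e` only receives
contributions from monomials of `f` with exponent `d` such that each `d i` is at most the
total degree of `e`. -/
def MvPowerSeries.substSeries {σ τ R : Type*} [Fintype σ] [DecidableEq σ] [CommRing R]
    (a : σ → MvPowerSeries τ R) (f : MvPowerSeries σ R) : MvPowerSeries τ R :=
  fun e => ∑ d ∈ Finset.Iic (Finsupp.equivFunOnFinite.symm fun _ : σ => e.sum fun _ n => n),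
    MvPowerSeries.coeff (R := R) d f * MvPowerSeries.coeff (R := R) e (∏ i, (a i) ^ d i)

/-- A one-dimensional commutative formal group law over a commutative ring `R`:
a power series `F ∈ R[[x,y]]` with `F(x,0) = x`, `F(0,y) = y`, `F(x,y) = F(y,x)` and
`F(F(x,y),z) = F(x,F(y,z))` (an identity of power series in `R[[x,y,z]]`). -/
structure IsFormalGroupLaw (R : Type*) [CommRing R] (F : MvPowerSeries (Fin 2) R) : Prop where
  subst_zero_right :
    MvPowerSeries.substSeries (![X 0, 0] : Fin 2 → MvPowerSeries (Fin 2) R) F = X 0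
  subst_zero_left :
    MvPowerSeries.substSeries (![0, X 1] : Fin 2 → MvPowerSeries (Fin 2) R) F = X 1
  comm :
    MvPowerSeries.substSeries (![X 1, X 0] : Fin 2 → MvPowerSeries (Fin 2) R) F = F
  assoc :
    MvPowerSeries.substSeries
      (![MvPowerSeries.substSeries (![X 0, X 1] : Fin 2 → MvPowerSeries (Fin 3) R) F, X 2] :
        Fin 2 → MvPowerSeries (Fin 3) R) F
    = MvPowerSeries.substSeries
      (![X 0, MvPowerSeries.substSeries (![X 1, X 2] : Fin 2 → MvPowerSeries (Fin 3) R) F] :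
        Fin 2 → MvPowerSeries (Fin 3) R) F

/-- `ι` is the formal inverse of the formal group law `F`: a univariate power series with
zero constant term such that `F(x, ι(x)) = 0`. -/
def IsFormalInverse {R : Type*} [CommRing R] (F : MvPowerSeries (Fin 2) R)
    (ι : PowerSeries R) : Prop :=
  PowerSeries.constantCoeff (R := R) ι = 0 ∧
    MvPowerSeries.substSeries (![PowerSeries.X, ι] : Fin 2 → PowerSeries R) F = 0

/-- The formal difference `x -_F y := F(x, ι(y))`. -/
def fDiff {R : Type*} [CommRing R] (F : MvPowerSeries (Fin 2) R) (ι : PowerSeries R) :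
    MvPowerSeries (Fin 2) R :=
  MvPowerSeries.substSeries
    (![X 0, MvPowerSeries.substSeries (fun _ : Unit => (X 1 : MvPowerSeries (Fin 2) R)) ι] :
      Fin 2 → MvPowerSeries (Fin 2) R) F

/-- The formal difference `y -_F x := F(y, ι(x))`. -/
def fDiffSwap {R : Type*} [CommRing R] (F : MvPowerSeries (Fin 2) R) (ι : PowerSeries R) :
    MvPowerSeries (Fin 2) R :=
  MvPowerSeries.substSeries
    (![X 1, MvPowerSeries.substSeries (fun _ : Unit => (X 0 : MvPowerSeries (Fin 2) R)) ι] :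
      Fin 2 → MvPowerSeries (Fin 2) R) F

section Aux
open Finset


variable {R : Type*} [CommRing R]

/-- the exponent `x^i y^j` -/
def mm (i j : ℕ) : Fin 2 →₀ ℕ := Finsupp.single 0 i + Finsupp.single 1 j

@[simp] lemma mm_apply0 (i j : ℕ) : mm i j 0 = i := by
  simp [mm, Finsupp.single_apply]

@[simp] lemma mm_apply1 (i j : ℕ) : mm i j 1 = j := by
  simp [mm, Finsupp.single_apply]

lemma eq_mm (e : Fin 2 →₀ ℕ) : e = mm (e 0) (e 1) := by
  ext a
  fin_cases a <;> simp

lemma mm_zero : mm 0 0 = 0 := by simp [mm]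

lemma sum_eq_deg (e : Fin 2 →₀ ℕ) : (e.sum fun _ n => n) = e 0 + e 1 := by
  rw [Finsupp.sum_fintype _ _ (fun _ => rfl), Fin.sum_univ_two]

lemma mm_add (i j k l : ℕ) : mm i j + mm k l = mm (i + k) (j + l) := by
  ext a; fin_cases a <;> simp

lemma mm_inj {i j k l : ℕ} : mm i j = mm k l ↔ i = k ∧ j = l := by
  constructor
  · intro h
    constructor
    · simpa using congrArg (fun e : Fin 2 →₀ ℕ => e 0) h
    · simpa using congrArg (fun e : Fin 2 →₀ ℕ => e 1) h
  · rintro ⟨rfl, rfl⟩; rfl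

/-- Expansion of a `Fin 2`-ary substitution coefficient as a double sum. -/
lemma coeff_substSeries_fin2 {τ : Type*} (a b : MvPowerSeries τ R)
    (f : MvPowerSeries (Fin 2) R) (e : τ →₀ ℕ) (n : ℕ) (hn : (e.sum fun _ k => k) = n) :
    MvPowerSeries.coeff (R := R) e (MvPowerSeries.substSeries ![a, b] f) =
      ∑ i ∈ range (n + 1), ∑ j ∈ range (n + 1),
        MvPowerSeries.coeff (R := R) (mm i j) f * MvPowerSeries.coeff (R := R) e (a ^ i * b ^ j) := by
  have hco : MvPowerSeries.coeff (R := R) e (MvPowerSeries.substSeries ![a, b] f) =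
      ∑ d ∈ Finset.Iic (Finsupp.equivFunOnFinite.symm fun _ : Fin 2 => n),
        MvPowerSeries.coeff (R := R) d f *
          MvPowerSeries.coeff (R := R) e (∏ i, (![a, b] i) ^ d i) := by
    rw [← hn]; rfl
  rw [hco, ← Finset.sum_product']
  refine Finset.sum_nbij' (fun d => (d 0, d 1)) (fun p => mm p.1 p.2) ?_ ?_ ?_ ?_ ?_
  · intro d hd
    rw [Finset.mem_Iic, Finsupp.le_def] at hd
    have h0 := hd 0
    have h1 := hd 1
    simp only [Finsupp.coe_equivFunOnFinite_symm] at h0 h1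
    simp only [Finset.mem_product, Finset.mem_range]
    omega
  · intro p hp
    simp only [Finset.mem_product, Finset.mem_range] at hp
    rw [Finset.mem_Iic, Finsupp.le_def]
    intro i
    fin_cases i <;> simp <;> omega
  · intro d _; exact (eq_mm d).symm
  · intro p _; simp
  · intro d _
    rw [← eq_mm d, Fin.prod_univ_two]
    simp

/-- Product rule for coefficients at `mm p q`. -/
lemma coeff_mm_mul (f g : MvPowerSeries (Fin 2) R) (p q : ℕ) :
    MvPowerSeries.coeff (R := R) (mm p q) (f * g) =
      ∑ i ∈ range (p + 1), ∑ j ∈ range (q + 1),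
        MvPowerSeries.coeff (R := R) (mm i j) f * MvPowerSeries.coeff (R := R) (mm (p - i) (q - j)) g := by
  rw [MvPowerSeries.coeff_mul, ← Finset.sum_product']
  refine Finset.sum_nbij' (fun d => (d.1 0, d.1 1)) (fun x => (mm x.1 x.2, mm (p - x.1) (q - x.2)))
    ?_ ?_ ?_ ?_ ?_
  · rintro ⟨d1, d2⟩ hd
    rw [HasAntidiagonal.mem_antidiagonal] at hd
    have h0 := congrArg (fun e : Fin 2 →₀ ℕ => e 0) hd
    have h1 := congrArg (fun e : Fin 2 →₀ ℕ => e 1) hd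
    simp only [Finsupp.add_apply, mm_apply0, mm_apply1] at h0 h1
    simp only [Finset.mem_product, Finset.mem_range]
    omega
  · rintro ⟨i, j⟩ hij
    simp only [Finset.mem_product, Finset.mem_range] at hij
    rw [HasAntidiagonal.mem_antidiagonal, mm_add]
    rw [mm_inj]
    omega
  · rintro ⟨d1, d2⟩ hd
    rw [HasAntidiagonal.mem_antidiagonal] at hd
    have h0 := congrArg (fun e : Fin 2 →₀ ℕ => e 0) hd
    have h1 := congrArg (fun e : Fin 2 →₀ ℕ => e 1) hd
    simp only [Finsupp.add_apply, mm_apply0, mm_apply1] at h0 h1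
    simp only [Prod.mk.injEq]
    constructor
    · exact (eq_mm d1).symm
    · rw [eq_mm d2]; rw [mm_inj]; omega
  · rintro ⟨i, j⟩ _; simp
  · rintro ⟨d1, d2⟩ hd
    rw [HasAntidiagonal.mem_antidiagonal] at hd
    have h0 := congrArg (fun e : Fin 2 →₀ ℕ => e 0) hd
    have h1 := congrArg (fun e : Fin 2 →₀ ℕ => e 1) hd
    simp only [Finsupp.add_apply, mm_apply0, mm_apply1] at h0 h1
    have e1 : d2 = mm (p - d1 0) (q - d1 1) := by
      rw [eq_mm d2, mm_inj]; omega
    rw [← eq_mm d1, ← e1]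

lemma mm_single0 (k : ℕ) : Finsupp.single (0 : Fin 2) k = mm k 0 := by
  simp [mm]

lemma mm_single1 (k : ℕ) : Finsupp.single (1 : Fin 2) k = mm 0 k := by
  simp [mm]

lemma coeff_mm_Xpow0 (p q k : ℕ) :
    MvPowerSeries.coeff (R := R) (mm p q) ((X 0 : MvPowerSeries (Fin 2) R) ^ k) =
      if p = k ∧ q = 0 then 1 else 0 := by
  rw [MvPowerSeries.coeff_X_pow, mm_single0]
  by_cases h : p = k ∧ q = 0
  · obtain ⟨rfl, rfl⟩ := h; simp
  · rw [if_neg h, if_neg (fun hc => h (by rw [mm_inj] at hc; tauto))]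

lemma coeff_mm_Xpow1 (p q k : ℕ) :
    MvPowerSeries.coeff (R := R) (mm p q) ((X 1 : MvPowerSeries (Fin 2) R) ^ k) =
      if p = 0 ∧ q = k then 1 else 0 := by
  rw [MvPowerSeries.coeff_X_pow, mm_single1]
  by_cases h : p = 0 ∧ q = k
  · obtain ⟨rfl, rfl⟩ := h; simp
  · rw [if_neg h, if_neg (fun hc => h (by rw [mm_inj] at hc; tauto))]

lemma coeff_mm_one (p q : ℕ) :
    MvPowerSeries.coeff (R := R) (mm p q) (1 : MvPowerSeries (Fin 2) R) =
      if p = 0 ∧ q = 0 then 1 else 0 := by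
  have := coeff_mm_Xpow0 (R := R) p q 0
  simpa using this

lemma coeff_mm_Xpow0_mul (g : MvPowerSeries (Fin 2) R) (k p q : ℕ) :
    MvPowerSeries.coeff (R := R) (mm p q) ((X 0 : MvPowerSeries (Fin 2) R) ^ k * g) =
      if k ≤ p then MvPowerSeries.coeff (R := R) (mm (p - k) q) g else 0 := by
  rw [coeff_mm_mul]
  have hrow : ∀ i ∈ range (p + 1),
      (∑ j ∈ range (q + 1), MvPowerSeries.coeff (R := R) (mm i j) ((X 0 : MvPowerSeries (Fin 2) R) ^ k) *
        MvPowerSeries.coeff (R := R) (mm (p - i) (q - j)) g) =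
      if i = k then MvPowerSeries.coeff (R := R) (mm (p - i) q) g else 0 := by
    intro i _
    by_cases hik : i = k
    · subst hik
      rw [if_pos rfl]
      rw [Finset.sum_eq_single 0]
      · simp [coeff_mm_Xpow0]
      · intro j _ hj
        rw [coeff_mm_Xpow0, if_neg (by tauto), zero_mul]
      · intro h; exact absurd (Finset.mem_range.2 (by omega)) h
    · rw [if_neg hik]
      refine Finset.sum_eq_zero fun j _ => ?_
      rw [coeff_mm_Xpow0, if_neg (by tauto), zero_mul]
  rw [Finset.sum_congr rfl hrow, Finset.sum_ite_eq' (range (p + 1)) k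
    (fun i => MvPowerSeries.coeff (R := R) (mm (p - i) q) g)]
  simp [Nat.lt_succ_iff]

lemma coeff_mm_mul_Xpow1 (g : MvPowerSeries (Fin 2) R) (k p q : ℕ) :
    MvPowerSeries.coeff (R := R) (mm p q) (g * (X 1 : MvPowerSeries (Fin 2) R) ^ k) =
      if k ≤ q then MvPowerSeries.coeff (R := R) (mm p (q - k)) g else 0 := by
  rw [coeff_mm_mul]
  have hrow : ∀ i ∈ range (p + 1),
      (∑ j ∈ range (q + 1), MvPowerSeries.coeff (R := R) (mm i j) g *
        MvPowerSeries.coeff (R := R) (mm (p - i) (q - j)) ((X 1 : MvPowerSeries (Fin 2) R) ^ k)) =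
      if i = p ∧ k ≤ q then MvPowerSeries.coeff (R := R) (mm p (q - k)) g * 1 else 0 := by
    intro i hi
    rw [Finset.mem_range] at hi
    by_cases hik : i = p ∧ k ≤ q
    · obtain ⟨rfl, hk⟩ := hik
      rw [if_pos ⟨rfl, hk⟩]
      rw [Finset.sum_eq_single (q - k)]
      · rw [coeff_mm_Xpow1, if_pos (by omega)]
      · intro j hj hne
        rw [Finset.mem_range] at hj
        rw [coeff_mm_Xpow1, if_neg (by omega), mul_zero]
      · intro h; exact absurd (Finset.mem_range.2 (by omega)) h
    · rw [if_neg hik]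
      refine Finset.sum_eq_zero fun j hj => ?_
      rw [Finset.mem_range] at hj
      rw [coeff_mm_Xpow1, if_neg (by omega), mul_zero]
  rw [Finset.sum_congr rfl hrow]
  by_cases h : k ≤ q
  · rw [Finset.sum_eq_single p]
    · rw [if_pos ⟨rfl, h⟩, mul_one, if_pos h]
    · intro i _ hne; rw [if_neg (by tauto)]
    · intro hp; exact absurd (Finset.mem_range.2 (by omega)) hp
  · rw [if_neg h]
    refine Finset.sum_eq_zero fun i _ => ?_
    rw [if_neg (by tauto)]

lemma coeff_mm_pow_eq_zero {f : MvPowerSeries (Fin 2) R}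
    (h0 : MvPowerSeries.coeff (R := R) (mm 0 0) f = 0) :
    ∀ i p q, p + q < i → MvPowerSeries.coeff (R := R) (mm p q) (f ^ i) = 0 := by
  intro i
  induction i with
  | zero => intro p q h; omega
  | succ i ih =>
    intro p q h
    rw [pow_succ, coeff_mm_mul]
    refine Finset.sum_eq_zero fun a ha => Finset.sum_eq_zero fun b hb => ?_
    rw [Finset.mem_range] at ha hb
    by_cases hab : a + b < i
    · rw [ih a b hab, zero_mul]
    · have h1 : p - a = 0 := by omega
      have h2 : q - b = 0 := by omega
      rw [h1, h2, h0, mul_zero]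

lemma eq_single_unit (d : Unit →₀ ℕ) : d = Finsupp.single () (d ()) := by
  ext a
  simp

lemma coeff_substSeries_unit {τ : Type*} (a : MvPowerSeries τ R) (f : PowerSeries R)
    (e : τ →₀ ℕ) (n : ℕ) (hn : (e.sum fun _ k => k) = n) :
    MvPowerSeries.coeff (R := R) e (MvPowerSeries.substSeries (fun _ : Unit => a) f) =
      ∑ k ∈ range (n + 1), PowerSeries.coeff (R := R) k f * MvPowerSeries.coeff (R := R) e (a ^ k) := by
  have hco : MvPowerSeries.coeff (R := R) e (MvPowerSeries.substSeries (fun _ : Unit => a) f) =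
      ∑ d ∈ Finset.Iic (Finsupp.equivFunOnFinite.symm fun _ : Unit => n),
        MvPowerSeries.coeff (R := R) d f * MvPowerSeries.coeff (R := R) e (∏ i : Unit, a ^ d i) := by
    rw [← hn]; rfl
  rw [hco]
  refine Finset.sum_nbij' (fun d => d ()) (fun k => Finsupp.single () k) ?_ ?_ ?_ ?_ ?_
  · intro d hd
    rw [Finset.mem_Iic, Finsupp.le_def] at hd
    have := hd ()
    simp only [Finsupp.coe_equivFunOnFinite_symm] at this
    simp only [Finset.mem_range]
    omega
  · intro k hk
    rw [Finset.mem_range] at hk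
    rw [Finset.mem_Iic, Finsupp.le_def]
    intro i
    simp only [Finsupp.coe_equivFunOnFinite_symm, Finsupp.single_eq_same]
    omega
  · intro d _; exact (eq_single_unit d).symm
  · intro k _; simp
  · intro d _
    rw [Fintype.prod_unique]
    congr 1
    rw [PowerSeries.coeff, ← eq_single_unit d]

lemma ps_coeff_mul (f g : PowerSeries R) (n : ℕ) :
    PowerSeries.coeff (R := R) n (f * g) =
      ∑ i ∈ range (n + 1), PowerSeries.coeff (R := R) i f * PowerSeries.coeff (R := R) (n - i) g := by
  rw [PowerSeries.coeff_mul, Finset.Nat.sum_antidiagonal_eq_sum_range_succ_mk]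

lemma ps_coeff_Xpow_mul (g : PowerSeries R) (k n : ℕ) :
    PowerSeries.coeff (R := R) n ((PowerSeries.X : PowerSeries R) ^ k * g) =
      if k ≤ n then PowerSeries.coeff (R := R) (n - k) g else 0 := by
  rw [ps_coeff_mul]
  by_cases h : k ≤ n
  · rw [if_pos h, Finset.sum_eq_single k]
    · rw [PowerSeries.coeff_X_pow, if_pos rfl, one_mul]
    · intro i _ hne
      rw [PowerSeries.coeff_X_pow, if_neg hne, zero_mul]
    · intro hk; exact absurd (Finset.mem_range.2 (by omega)) hk
  · rw [if_neg h]
    refine Finset.sum_eq_zero fun i hi => ?_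
    rw [Finset.mem_range] at hi
    rw [PowerSeries.coeff_X_pow, if_neg (by omega), zero_mul]

lemma ps_coeff_pow_eq_zero {f : PowerSeries R} (h0 : PowerSeries.coeff (R := R) 0 f = 0) :
    ∀ i n, n < i → PowerSeries.coeff (R := R) n (f ^ i) = 0 := by
  intro i
  induction i with
  | zero => intro n h; omega
  | succ i ih =>
    intro n h
    rw [pow_succ, ps_coeff_mul]
    refine Finset.sum_eq_zero fun a ha => ?_
    rw [Finset.mem_range] at ha
    by_cases hab : a < i
    · rw [ih a hab, zero_mul]
    · have h1 : n - a = 0 := by omega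
      rw [h1, h0, mul_zero]

lemma coeff_w (f : PowerSeries R) (p q : ℕ) :
    MvPowerSeries.coeff (R := R) (mm p q)
        (MvPowerSeries.substSeries (fun _ : Unit => (X 1 : MvPowerSeries (Fin 2) R)) f) =
      if p = 0 then PowerSeries.coeff (R := R) q f else 0 := by
  rw [coeff_substSeries_unit _ _ _ (p + q) (by rw [sum_eq_deg]; simp)]
  by_cases hp : p = 0
  · subst hp
    rw [if_pos rfl, Finset.sum_eq_single q]
    · rw [coeff_mm_Xpow1, if_pos ⟨rfl, rfl⟩, mul_one]
    · intro k _ hne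
      rw [coeff_mm_Xpow1, if_neg (by tauto), mul_zero]
    · intro hq; exact absurd (Finset.mem_range.2 (by omega)) hq
  · rw [if_neg hp]
    refine Finset.sum_eq_zero fun k _ => ?_
    rw [coeff_mm_Xpow1, if_neg (by tauto), mul_zero]

lemma coeff_w_pow (f : PowerSeries R) :
    ∀ (l p q : ℕ), MvPowerSeries.coeff (R := R) (mm p q)
        (MvPowerSeries.substSeries (fun _ : Unit => (X 1 : MvPowerSeries (Fin 2) R)) f ^ l) =
      if p = 0 then PowerSeries.coeff (R := R) q (f ^ l) else 0 := by
  intro l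
  induction l with
  | zero =>
    intro p q
    rw [pow_zero, pow_zero, coeff_mm_one]
    by_cases hp : p = 0
    · subst hp
      rw [if_pos rfl]
      rw [PowerSeries.coeff_one]
      by_cases hq : q = 0 <;> simp [hq]
    · rw [if_neg (by tauto), if_neg hp]
  | succ l ih =>
    intro p q
    rw [pow_succ', pow_succ', coeff_mm_mul]
    by_cases hp : p = 0
    · subst hp
      rw [if_pos rfl, ps_coeff_mul, Finset.sum_range_one]
      refine Finset.sum_congr rfl fun j _ => ?_
      rw [coeff_w, if_pos rfl, ih]
      norm_num
    · rw [if_neg hp]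
      refine Finset.sum_eq_zero fun i hi => Finset.sum_eq_zero fun j _ => ?_
      rw [Finset.mem_range] at hi
      by_cases hi0 : i = 0
      · subst hi0
        rw [ih, if_neg (by omega), mul_zero]
      · rw [coeff_w, if_neg hi0, zero_mul]

lemma coeff_mm_XpowXpow (i j p q : ℕ) :
    MvPowerSeries.coeff (R := R) (mm p q) ((X 0 : MvPowerSeries (Fin 2) R) ^ i * (X 1) ^ j) =
      if p = i ∧ q = j then 1 else 0 := by
  rw [coeff_mm_mul_Xpow1]
  by_cases hj : j ≤ q
  · rw [if_pos hj, coeff_mm_Xpow0]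
    by_cases h : p = i ∧ q = j
    · rw [if_pos ⟨h.1, by omega⟩, if_pos h]
    · rw [if_neg (by omega), if_neg h]
  · rw [if_neg hj, if_neg (by omega)]

lemma collapse (n a b : ℕ) (ha : a ≤ n) (hb : b ≤ n) (g : ℕ → ℕ → R) :
    (∑ i ∈ range (n + 1), ∑ j ∈ range (n + 1), if i = a ∧ j = b then g i j else 0) = g a b := by
  rw [Finset.sum_eq_single a]
  · rw [Finset.sum_eq_single b]
    · rw [if_pos ⟨rfl, rfl⟩]
    · intro j _ hne; rw [if_neg (by tauto)]
    · intro hb'; exact absurd (Finset.mem_range.2 (by omega)) hb'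
  · intro i _ hne
    refine Finset.sum_eq_zero fun j _ => ?_
    rw [if_neg (by tauto)]
  · intro ha'; exact absurd (Finset.mem_range.2 (by omega)) ha'

section FGL

variable {F : MvPowerSeries (Fin 2) R}

/-- `F(x,0) = x` gives the coefficients of `x^p`. -/
lemma c_p0 (hF :
    MvPowerSeries.substSeries (![X 0, 0] : Fin 2 → MvPowerSeries (Fin 2) R) F = X 0) (p : ℕ) :
    MvPowerSeries.coeff (R := R) (mm p 0) F = if p = 1 then 1 else 0 := by
  have h := congrArg (MvPowerSeries.coeff (R := R) (mm p 0)) hF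
  rw [coeff_substSeries_fin2 _ _ _ _ p (by rw [sum_eq_deg]; simp)] at h
  have hL : (∑ i ∈ range (p + 1), ∑ j ∈ range (p + 1),
      MvPowerSeries.coeff (R := R) (mm i j) F *
        MvPowerSeries.coeff (R := R) (mm p 0) ((X 0 : MvPowerSeries (Fin 2) R) ^ i * 0 ^ j)) =
      MvPowerSeries.coeff (R := R) (mm p 0) F := by
    have : ∀ i ∈ range (p + 1), ∀ j ∈ range (p + 1),
        MvPowerSeries.coeff (R := R) (mm i j) F *
          MvPowerSeries.coeff (R := R) (mm p 0) ((X 0 : MvPowerSeries (Fin 2) R) ^ i * 0 ^ j) =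
        if i = p ∧ j = 0 then MvPowerSeries.coeff (R := R) (mm i j) F else 0 := by
      intro i _ j _
      by_cases hj : j = 0
      · subst hj
        rw [pow_zero, mul_one, coeff_mm_Xpow0]
        by_cases hip : i = p
        · subst hip; rw [if_pos ⟨rfl, rfl⟩, if_pos ⟨rfl, rfl⟩, mul_one]
        · rw [if_neg (by omega), if_neg (by tauto), mul_zero]
      · rw [zero_pow hj, mul_zero, map_zero, mul_zero, if_neg (by tauto)]
    rw [Finset.sum_congr rfl fun i hi => Finset.sum_congr rfl fun j hj => this i hi j hj]
    rw [collapse p p 0 le_rfl (by omega)]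
  rw [hL] at h
  rw [h, ← pow_one (X 0 : MvPowerSeries (Fin 2) R), coeff_mm_Xpow0]
  by_cases hp : p = 1
  · rw [if_pos (by omega), if_pos hp]
  · rw [if_neg (by omega), if_neg hp]

/-- Commutativity gives symmetry of coefficients. -/
lemma c_symm (hF :
    MvPowerSeries.substSeries (![X 1, X 0] : Fin 2 → MvPowerSeries (Fin 2) R) F = F)
    (p q : ℕ) :
    MvPowerSeries.coeff (R := R) (mm q p) F = MvPowerSeries.coeff (R := R) (mm p q) F := by
  have h := congrArg (MvPowerSeries.coeff (R := R) (mm p q)) hF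
  rw [coeff_substSeries_fin2 _ _ _ _ (p + q) (by rw [sum_eq_deg]; simp)] at h
  rw [← h]
  have : ∀ i ∈ range (p + q + 1), ∀ j ∈ range (p + q + 1),
      MvPowerSeries.coeff (R := R) (mm i j) F *
        MvPowerSeries.coeff (R := R) (mm p q) ((X 1 : MvPowerSeries (Fin 2) R) ^ i * (X 0) ^ j) =
      if i = q ∧ j = p then MvPowerSeries.coeff (R := R) (mm i j) F else 0 := by
    intro i _ j _
    rw [mul_comm ((X 1 : MvPowerSeries (Fin 2) R) ^ i), coeff_mm_XpowXpow]
    by_cases hc : i = q ∧ j = p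
    · rw [if_pos (by omega), if_pos hc, mul_one]
    · rw [if_neg (by omega), if_neg hc, mul_zero]
  rw [Finset.sum_congr rfl fun i hi => Finset.sum_congr rfl fun j hj => this i hi j hj]
  rw [collapse (p + q) q p (by omega) (by omega)]

end FGL

section Inv

variable {F : MvPowerSeries (Fin 2) R} {ι : PowerSeries R}

lemma inv_rel (hF2 :
    MvPowerSeries.substSeries (![PowerSeries.X, ι] : Fin 2 → PowerSeries R) F = 0) (n : ℕ) :
    (∑ i ∈ range (n + 1), ∑ j ∈ range (n + 1),
        MvPowerSeries.coeff (R := R) (mm i j) F * PowerSeries.coeff (R := R) (n - i) (ι ^ j)) = 0 := by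
  have h := congrArg (MvPowerSeries.coeff (R := R) (Finsupp.single () n)) hF2
  rw [coeff_substSeries_fin2 _ _ _ _ n (by rw [Finsupp.sum_single_index]; rfl), map_zero] at h
  rw [← h]
  refine Finset.sum_congr rfl fun i hi => Finset.sum_congr rfl fun j _ => ?_
  rw [Finset.mem_range] at hi
  congr 1
  show PowerSeries.coeff (R := R) (n - i) (ι ^ j) =
    PowerSeries.coeff (R := R) n ((PowerSeries.X : PowerSeries R) ^ i * ι ^ j)
  rw [ps_coeff_Xpow_mul, if_pos (by omega)]

/-- Coefficients of `fDiff F ι = F(x, ι(y))`. -/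
lemma coeff_fDiff (p q n : ℕ) (hn : p + q = n) :
    MvPowerSeries.coeff (R := R) (mm p q)
        (MvPowerSeries.substSeries
          (![X 0, MvPowerSeries.substSeries
              (fun _ : Unit => (X 1 : MvPowerSeries (Fin 2) R)) ι] :
            Fin 2 → MvPowerSeries (Fin 2) R) F) =
      ∑ l ∈ range (n + 1), MvPowerSeries.coeff (R := R) (mm p l) F * PowerSeries.coeff (R := R) q (ι ^ l) := by
  rw [coeff_substSeries_fin2 _ _ _ _ n (by rw [sum_eq_deg]; simp [hn])]
  have hterm : ∀ i ∈ range (n + 1), (∑ j ∈ range (n + 1),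
      MvPowerSeries.coeff (R := R) (mm i j) F * MvPowerSeries.coeff (R := R) (mm p q)
        ((X 0 : MvPowerSeries (Fin 2) R) ^ i *
          MvPowerSeries.substSeries (fun _ : Unit => (X 1 : MvPowerSeries (Fin 2) R)) ι ^ j)) =
      if i = p then (∑ l ∈ range (n + 1),
        MvPowerSeries.coeff (R := R) (mm p l) F * PowerSeries.coeff (R := R) q (ι ^ l)) else 0 := by
    intro i _
    by_cases hip : i = p
    · subst hip
      rw [if_pos rfl]
      refine Finset.sum_congr rfl fun l _ => ?_
      rw [coeff_mm_Xpow0_mul, if_pos le_rfl, Nat.sub_self, coeff_w_pow, if_pos rfl]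
    · rw [if_neg hip]
      refine Finset.sum_eq_zero fun j _ => ?_
      rw [coeff_mm_Xpow0_mul]
      by_cases hi : i ≤ p
      · rw [if_pos hi, coeff_w_pow, if_neg (by omega), mul_zero]
      · rw [if_neg hi, mul_zero]
  rw [Finset.sum_congr rfl hterm, Finset.sum_ite_eq' (range (n + 1)) p, if_pos
    (Finset.mem_range.2 (by omega))]

end Inv


end Aux

set_option maxHeartbeats 2000000 in
/-- Let `F` be a one-dimensional commutative formal group law over `R`,
with `a₁₁, a₁₂, a₁₃, a₂₂` the coefficients of `xy, x²y, x³y, x²y²` in `F`, `ι` its formal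
inverse, and `r` the unique series with `F(x,y) = y + x·r(x,y)`. Then `r(x -_F y, y)` and
`1 + a₁₁y + a₁₂xy + (a₂₂ - a₁₂a₁₁)(x-y)y² + a₁₃y((x-y)² + y²)` have equal coefficients
in all total degrees `< 4`. -/
theorem fgl_r_of_fDiff_mod_deg4 {R : Type*} [CommRing R]
    (F : MvPowerSeries (Fin 2) R) (hF : IsFormalGroupLaw R F)
    (ι : PowerSeries R) (hι : IsFormalInverse F ι)
    (a₁₁ a₁₂ a₁₃ a₂₂ : R)
    (ha₁₁ : a₁₁ = MvPowerSeries.coeff (R := R) (Finsupp.single 0 1 + Finsupp.single 1 1) F)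
    (ha₁₂ : a₁₂ = MvPowerSeries.coeff (R := R) (Finsupp.single 0 2 + Finsupp.single 1 1) F)
    (ha₁₃ : a₁₃ = MvPowerSeries.coeff (R := R) (Finsupp.single 0 3 + Finsupp.single 1 1) F)
    (ha₂₂ : a₂₂ = MvPowerSeries.coeff (R := R) (Finsupp.single 0 2 + Finsupp.single 1 2) F)
    (r : MvPowerSeries (Fin 2) R) (hr : F = X 1 + X 0 * r) :
    ∀ d : Fin 2 →₀ ℕ, d 0 + d 1 < 4 →
      MvPowerSeries.coeff (R := R) d
        (MvPowerSeries.substSeries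
          (![fDiff F ι, X 1] : Fin 2 → MvPowerSeries (Fin 2) R) r) =
      MvPowerSeries.coeff (R := R) d
        (1 + C (σ := Fin 2) (R := R) a₁₁ * X 1 + C (σ := Fin 2) (R := R) a₁₂ * (X 0 * X 1)
          + C (σ := Fin 2) (R := R) (a₂₂ - a₁₂ * a₁₁) * ((X 0 - X 1) * X 1 ^ 2)
          + C (σ := Fin 2) (R := R) a₁₃ * (X 1 * ((X 0 - X 1) ^ 2 + X 1 ^ 2))) := by
  classical
  -- coefficient abbreviations
  have hc := c_p0 hF.subst_zero_right
  have hsym := c_symm hF.comm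
  have hc00 : MvPowerSeries.coeff (R := R) (mm 0 0) F = 0 := by rw [hc]; norm_num
  have hc10 : MvPowerSeries.coeff (R := R) (mm 1 0) F = 1 := by rw [hc]; norm_num
  have hc20 : MvPowerSeries.coeff (R := R) (mm 2 0) F = 0 := by rw [hc]; norm_num
  have hc30 : MvPowerSeries.coeff (R := R) (mm 3 0) F = 0 := by rw [hc]; norm_num
  have hc40 : MvPowerSeries.coeff (R := R) (mm 4 0) F = 0 := by rw [hc]; norm_num
  have hc01 : MvPowerSeries.coeff (R := R) (mm 0 1) F = 1 := by rw [hsym 1 0]; exact hc10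
  have hc02 : MvPowerSeries.coeff (R := R) (mm 0 2) F = 0 := by rw [hsym 2 0]; exact hc20
  have hc03 : MvPowerSeries.coeff (R := R) (mm 0 3) F = 0 := by rw [hsym 3 0]; exact hc30
  have hc11 : MvPowerSeries.coeff (R := R) (mm 1 1) F = a₁₁ := ha₁₁.symm
  have hc21 : MvPowerSeries.coeff (R := R) (mm 2 1) F = a₁₂ := ha₁₂.symm
  have hc12 : MvPowerSeries.coeff (R := R) (mm 1 2) F = a₁₂ := by rw [hsym 2 1]; exact hc21
  have hc31 : MvPowerSeries.coeff (R := R) (mm 3 1) F = a₁₃ := ha₁₃.symm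
  have hc13 : MvPowerSeries.coeff (R := R) (mm 1 3) F = a₁₃ := by rw [hsym 3 1]; exact hc31
  have hc22 : MvPowerSeries.coeff (R := R) (mm 2 2) F = a₂₂ := ha₂₂.symm
  -- coefficients of the inverse
  have hb0 : PowerSeries.coeff (R := R) 0 ι = 0 := by
    rw [PowerSeries.coeff_zero_eq_constantCoeff]; exact hι.1
  have E1 := inv_rel hι.2 1
  have E2 := inv_rel hι.2 2
  have E3 := inv_rel hι.2 3
  simp only [Finset.sum_range_succ, Finset.sum_range_zero, zero_add, pow_zero, pow_one,
    PowerSeries.coeff_one] at E1 E2 E3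
  norm_num [hc00, hc10, hc20, hc30, hc01, hc02, hc03, hc11, hc21, hc12, hc31, hc13, hc22,
    hb0] at E1 E2 E3
  have hb1 : PowerSeries.coeff (R := R) 1 ι = -1 := by linear_combination E1
  have hpc0 : PowerSeries.constantCoeff (R := R) ι = 0 := hι.1
  have hq20 : PowerSeries.coeff (R := R) 0 (ι ^ 2) = 0 := ps_coeff_pow_eq_zero hb0 2 0 (by norm_num)
  have hq21 : PowerSeries.coeff (R := R) 1 (ι ^ 2) = 0 := ps_coeff_pow_eq_zero hb0 2 1 (by norm_num)
  have hq30 : PowerSeries.coeff (R := R) 0 (ι ^ 3) = 0 := ps_coeff_pow_eq_zero hb0 3 0 (by norm_num)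
  have hq31 : PowerSeries.coeff (R := R) 1 (ι ^ 3) = 0 := ps_coeff_pow_eq_zero hb0 3 1 (by norm_num)
  have hq32 : PowerSeries.coeff (R := R) 2 (ι ^ 3) = 0 := ps_coeff_pow_eq_zero hb0 3 2 (by norm_num)
  have hq22 : PowerSeries.coeff (R := R) 2 (ι ^ 2) = 1 := by
    rw [sq, ps_coeff_mul]
    norm_num [Finset.sum_range_succ, hb0, hb1]
  norm_num [hpc0, hq21, hq32, hq31, hq22, hb1] at E2 E3
  have hb2 : PowerSeries.coeff (R := R) 2 ι = a₁₁ := by linear_combination E2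
  have hq23 : PowerSeries.coeff (R := R) 3 (ι ^ 2) = -(2 * a₁₁) := by
    rw [sq, ps_coeff_mul]
    norm_num [Finset.sum_range_succ, hb0, hb1, hb2]
    try ring
  have hq33 : PowerSeries.coeff (R := R) 3 (ι ^ 3) = -1 := by
    rw [pow_succ, ps_coeff_mul]
    norm_num [Finset.sum_range_succ, hb0, hb1, hq20, hq21, hq22]
  rw [hb2] at E3
  have hb3 : PowerSeries.coeff (R := R) 3 ι = -(a₁₁ * a₁₁) := by linear_combination E3
  -- coefficients of fDiff
  have hud : ∀ p q n : ℕ, p + q = n → MvPowerSeries.coeff (R := R) (mm p q) (fDiff F ι) =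
      ∑ l ∈ Finset.range (n + 1),
        MvPowerSeries.coeff (R := R) (mm p l) F * PowerSeries.coeff (R := R) q (ι ^ l) :=
    fun p q n h => coeff_fDiff p q n h
  have hu00 : MvPowerSeries.coeff (R := R) (mm 0 0) (fDiff F ι) = 0 := by
    rw [hud 0 0 0 rfl]
    norm_num [Finset.sum_range_succ, hc00]
  have hu10 : MvPowerSeries.coeff (R := R) (mm 1 0) (fDiff F ι) = 1 := by
    rw [hud 1 0 1 rfl]
    norm_num [Finset.sum_range_succ, PowerSeries.coeff_one, hc10, hc11, hb0, hpc0]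
  have hu01 : MvPowerSeries.coeff (R := R) (mm 0 1) (fDiff F ι) = -1 := by
    rw [hud 0 1 1 rfl]
    norm_num [Finset.sum_range_succ, PowerSeries.coeff_one, hc00, hc01, hb1]
  have hu20 : MvPowerSeries.coeff (R := R) (mm 2 0) (fDiff F ι) = 0 := by
    rw [hud 2 0 2 rfl]
    norm_num [Finset.sum_range_succ, PowerSeries.coeff_one, hc20, hb0, hpc0, hq20]
  have hu11 : MvPowerSeries.coeff (R := R) (mm 1 1) (fDiff F ι) = -a₁₁ := by
    rw [hud 1 1 2 rfl]
    norm_num [Finset.sum_range_succ, PowerSeries.coeff_one, hc10, hc11, hc12, hb1, hq21]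
  have hu02 : MvPowerSeries.coeff (R := R) (mm 0 2) (fDiff F ι) = a₁₁ := by
    rw [hud 0 2 2 rfl]
    norm_num [Finset.sum_range_succ, PowerSeries.coeff_one, hc00, hc01, hc02, hb2, hq22]
  have hu30 : MvPowerSeries.coeff (R := R) (mm 3 0) (fDiff F ι) = 0 := by
    rw [hud 3 0 3 rfl]
    norm_num [Finset.sum_range_succ, PowerSeries.coeff_one, hc30, hb0, hpc0, hq20, hq30]
  have hu21 : MvPowerSeries.coeff (R := R) (mm 2 1) (fDiff F ι) = -a₁₂ := by
    rw [hud 2 1 3 rfl]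
    norm_num [Finset.sum_range_succ, PowerSeries.coeff_one, hc20, hc21, hc22, hb1, hq21, hq31]
  have hu12 : MvPowerSeries.coeff (R := R) (mm 1 2) (fDiff F ι) = a₁₁ * a₁₁ + a₁₂ := by
    rw [hud 1 2 3 rfl]
    norm_num [Finset.sum_range_succ, PowerSeries.coeff_one, hc10, hc11, hc12, hc13, hb2, hq22,
      hq32]
    try ring
  have hu03 : MvPowerSeries.coeff (R := R) (mm 0 3) (fDiff F ι) = -(a₁₁ * a₁₁) := by
    rw [hud 0 3 3 rfl]
    norm_num [Finset.sum_range_succ, PowerSeries.coeff_one, hc00, hc01, hc02, hc03, hb3, hq23,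
      hq33]
  have hvan := coeff_mm_pow_eq_zero (f := fDiff F ι) hu00
  -- coefficients of fDiff ^ 2
  have huu20 : MvPowerSeries.coeff (R := R) (mm 2 0) (fDiff F ι ^ 2) = 1 := by
    rw [sq, coeff_mm_mul]
    norm_num [Finset.sum_range_succ, hu00, hu10, hu20]
  have huu11 : MvPowerSeries.coeff (R := R) (mm 1 1) (fDiff F ι ^ 2) = -2 := by
    rw [sq, coeff_mm_mul]
    norm_num [Finset.sum_range_succ, hu00, hu10, hu01, hu11]
    try ring
  have huu02 : MvPowerSeries.coeff (R := R) (mm 0 2) (fDiff F ι ^ 2) = 1 := by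
    rw [sq, coeff_mm_mul]
    norm_num [Finset.sum_range_succ, hu00, hu01, hu02]
  -- coefficients of r
  have hrc : ∀ i j : ℕ, MvPowerSeries.coeff (R := R) (mm i j) r =
      MvPowerSeries.coeff (R := R) (mm (i + 1) j) F := by
    intro i j
    have h := congrArg (MvPowerSeries.coeff (R := R) (mm (i + 1) j)) hr
    rw [map_add] at h
    rw [← pow_one (X 1 : MvPowerSeries (Fin 2) R), coeff_mm_Xpow1, if_neg (by omega)] at h
    rw [← pow_one (X 0 : MvPowerSeries (Fin 2) R), coeff_mm_Xpow0_mul, if_pos (by omega),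
      Nat.add_sub_cancel, zero_add] at h
    exact h.symm
  -- master formula for the left-hand side
  have key : ∀ p q : ℕ, MvPowerSeries.coeff (R := R) (mm p q)
      (MvPowerSeries.substSeries (![fDiff F ι, X 1] : Fin 2 → MvPowerSeries (Fin 2) R) r) =
      ∑ i ∈ Finset.range (p + q + 1), ∑ j ∈ Finset.range (p + q + 1),
        MvPowerSeries.coeff (R := R) (mm (i + 1) j) F *
          (if j ≤ q then MvPowerSeries.coeff (R := R) (mm p (q - j)) (fDiff F ι ^ i) else 0) := by
    intro p q
    rw [coeff_substSeries_fin2 _ _ _ _ (p + q) (by rw [sum_eq_deg]; simp)]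
    refine Finset.sum_congr rfl fun i _ => Finset.sum_congr rfl fun j _ => ?_
    rw [hrc, coeff_mm_mul_Xpow1]
  -- normal form of the right-hand side
  set e2 : R := a₂₂ - a₁₂ * a₁₁ with he2
  have hrhs : (1 + C (σ := Fin 2) (R := R) a₁₁ * X 1 + C (σ := Fin 2) (R := R) a₁₂ * (X 0 * X 1)
      + C (σ := Fin 2) (R := R) e2 * ((X 0 - X 1) * X 1 ^ 2)
      + C (σ := Fin 2) (R := R) a₁₃ * (X 1 * ((X 0 - X 1) ^ 2 + X 1 ^ 2)) :
        MvPowerSeries (Fin 2) R) =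
      1 + C (σ := Fin 2) (R := R) a₁₁ * (X 0 ^ 0 * X 1 ^ 1) + C (σ := Fin 2) (R := R) a₁₂ * (X 0 ^ 1 * X 1 ^ 1)
        + C (σ := Fin 2) (R := R) e2 * (X 0 ^ 1 * X 1 ^ 2)
        - C (σ := Fin 2) (R := R) e2 * (X 0 ^ 0 * X 1 ^ 3)
        + C (σ := Fin 2) (R := R) a₁₃ * (X 0 ^ 2 * X 1 ^ 1)
        - C (σ := Fin 2) (R := R) a₁₃ * (X 0 ^ 1 * X 1 ^ 2)
        - C (σ := Fin 2) (R := R) a₁₃ * (X 0 ^ 1 * X 1 ^ 2)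
        + C (σ := Fin 2) (R := R) a₁₃ * (X 0 ^ 0 * X 1 ^ 3)
        + C (σ := Fin 2) (R := R) a₁₃ * (X 0 ^ 0 * X 1 ^ 3) := by
    ring
  intro d hd
  rw [eq_mm d]
  obtain ⟨p, q, hpq⟩ : ∃ p q : ℕ, d 0 = p ∧ d 1 = q ∧ p + q < 4 := ⟨d 0, d 1, rfl, rfl, hd⟩
  obtain ⟨hp, hq, hlt⟩ := hpq
  rw [hp, hq]
  have hp3 : p ≤ 3 := by omega
  have hq3 : q ≤ 3 := by omega
  interval_cases p <;> interval_cases q <;>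
  first
  | exact absurd hlt (by omega)
  | (rw [key, hrhs]
     simp only [map_add, map_sub, MvPowerSeries.coeff_C_mul, coeff_mm_XpowXpow, coeff_mm_one]
     norm_num [Finset.sum_range_succ, hc10, hc20, hc30, hc40, hc11, hc21, hc12, hc31, hc13,
       hc22, hu00, hu10, hu01, hu20, hu11, hu02, hu30, hu21, hu12, hu03, huu20, huu11, huu02,
       hvan, pow_one, coeff_mm_one]
     try rw [he2]
     try ring)
end
end

section
/- Let F be a one-dimensional commutative formal group law over a commutative ring R, with a₁₁, a₁₂, a₁₃, a₂₂ the coefficients of xy, x²y, x³y, x²y² in F, let ι be its formal inverse, let g be the unique series with F(x,y) = x + y - xy·g(x,y), and let r be the unique series with F(x,y) = y + x·r(x,y). Then the series r(x -_F y, y) + y·g(x -_F y, y -_F x) and 1 + a₁₂xy + (a₂₂ - a₁₂a₁₁)xy(x - y) + a₁₃xy(2y - x) have equal coefficients in all total degrees < 4. -/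
/-!
Formal group law preliminaries: substitution of (multivariate) formal power series,
the definition of a one-dimensional commutative formal group law, its formal inverse,
and the formal difference `x -_F y := F(x, ι(y))`.
-/

noncomputable section

open MvPowerSeries

section FGLAux

variable {R : Type*} [CommRing R]

/-- coefficient of `x^i y^j`. -/
def cf (φ : MvPowerSeries (Fin 2) R) (i j : ℕ) : R :=
  MvPowerSeries.coeff (R := R) (Finsupp.single 0 i + Finsupp.single 1 j) φ

lemma pair_apply0 (i j : ℕ) : (Finsupp.single 0 i + Finsupp.single 1 j : Fin 2 →₀ ℕ) 0 = i := by
  simp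

lemma pair_apply1 (i j : ℕ) : (Finsupp.single 0 i + Finsupp.single 1 j : Fin 2 →₀ ℕ) 1 = j := by
  simp

lemma fin2_eq (d : Fin 2 →₀ ℕ) :
    d = Finsupp.single 0 (d 0) + Finsupp.single 1 (d 1) := by
  ext k
  fin_cases k <;> simp

lemma pair_eq_iff {i j k l : ℕ} :
    (Finsupp.single 0 i + Finsupp.single 1 j : Fin 2 →₀ ℕ)
      = Finsupp.single 0 k + Finsupp.single 1 l ↔ i = k ∧ j = l := by
  constructor
  · intro h
    constructor
    · have := congrArg (fun f : Fin 2 →₀ ℕ => f 0) h; simpa using this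
    · have := congrArg (fun f : Fin 2 →₀ ℕ => f 1) h; simpa using this
  · rintro ⟨rfl, rfl⟩; rfl

lemma pair_sum (i j : ℕ) :
    (Finsupp.single 0 i + Finsupp.single 1 j : Fin 2 →₀ ℕ).sum (fun _ n => n) = i + j := by
  rw [Finsupp.sum_fintype _ _ (fun _ => rfl)]
  rw [Fin.sum_univ_two, pair_apply0, pair_apply1]

lemma cf_mul (φ ψ : MvPowerSeries (Fin 2) R) (i j : ℕ) :
    cf (φ * ψ) i j = ∑ p ∈ Finset.range (i+1), ∑ q ∈ Finset.range (j+1),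
      cf φ p q * cf ψ (i-p) (j-q) := by
  rw [cf, MvPowerSeries.coeff_mul, ← Finset.sum_product']
  apply Finset.sum_nbij'
    (i := fun (p : (Fin 2 →₀ ℕ) × (Fin 2 →₀ ℕ)) => (p.1 0, p.1 1))
    (j := fun (p : ℕ × ℕ) => ((Finsupp.single 0 p.1 + Finsupp.single 1 p.2 : Fin 2 →₀ ℕ),
      (Finsupp.single 0 (i - p.1) + Finsupp.single 1 (j - p.2) : Fin 2 →₀ ℕ)))
  · intro p hp
    rw [Finset.HasAntidiagonal.mem_antidiagonal] at hp
    have h0 : p.1 0 + p.2 0 = i := by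
      have := congrArg (fun f : Fin 2 →₀ ℕ => f 0) hp; simpa using this
    have h1 : p.1 1 + p.2 1 = j := by
      have := congrArg (fun f : Fin 2 →₀ ℕ => f 1) hp; simpa using this
    simp only [Finset.mem_product, Finset.mem_range]
    omega
  · intro p hp
    simp only [Finset.mem_product, Finset.mem_range] at hp
    rw [Finset.HasAntidiagonal.mem_antidiagonal]
    ext k
    fin_cases k <;> simp <;> omega
  · intro p hp
    rw [Finset.HasAntidiagonal.mem_antidiagonal] at hp
    have h0 : p.1 0 + p.2 0 = i := by
      have := congrArg (fun f : Fin 2 →₀ ℕ => f 0) hp; simpa using this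
    have h1 : p.1 1 + p.2 1 = j := by
      have := congrArg (fun f : Fin 2 →₀ ℕ => f 1) hp; simpa using this
    rw [Prod.ext_iff]
    constructor
    · exact (fin2_eq p.1).symm
    · ext k
      fin_cases k <;> simp <;> omega
  · intro p hp
    simp only [Finset.mem_product, Finset.mem_range] at hp
    rw [Prod.ext_iff]
    constructor
    · simpa using pair_apply0 p.1 p.2
    · simpa using pair_apply1 p.1 p.2
  · intro p hp
    rw [Finset.HasAntidiagonal.mem_antidiagonal] at hp
    have h0 : p.1 0 + p.2 0 = i := by
      have := congrArg (fun f : Fin 2 →₀ ℕ => f 0) hp; simpa using this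
    have h1 : p.1 1 + p.2 1 = j := by
      have := congrArg (fun f : Fin 2 →₀ ℕ => f 1) hp; simpa using this
    have e2 : p.2 = Finsupp.single 0 (i - p.1 0) + Finsupp.single 1 (j - p.1 1) := by
      ext k; fin_cases k <;> simp <;> omega
    show MvPowerSeries.coeff (R := R) p.1 φ * MvPowerSeries.coeff (R := R) p.2 ψ
      = cf φ (p.1 0) (p.1 1) * cf ψ (i - p.1 0) (j - p.1 1)
    rw [cf, cf, ← fin2_eq, ← e2]

lemma subst2_coeff {τ : Type*} (A B : MvPowerSeries τ R) (f : MvPowerSeries (Fin 2) R)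
    (e : τ →₀ ℕ) :
    MvPowerSeries.coeff (R := R) e (MvPowerSeries.substSeries ![A, B] f)
      = ∑ d0 ∈ Finset.range ((e.sum fun _ n => n)+1),
          ∑ d1 ∈ Finset.range ((e.sum fun _ n => n)+1),
          cf f d0 d1 * MvPowerSeries.coeff (R := R) e (A^d0 * B^d1) := by
  set N := e.sum fun _ n => n with hN
  have h0 : MvPowerSeries.coeff (R := R) e (MvPowerSeries.substSeries ![A,B] f)
      = ∑ d ∈ Finset.Iic (Finsupp.equivFunOnFinite.symm fun _ : Fin 2 => N),
        MvPowerSeries.coeff (R := R) d f * MvPowerSeries.coeff (R := R) e (∏ i, (![A,B] i) ^ d i) := rfl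
  rw [h0, ← Finset.sum_product']
  apply Finset.sum_nbij'
    (i := fun (d : Fin 2 →₀ ℕ) => (d 0, d 1))
    (j := fun (p : ℕ × ℕ) => (Finsupp.single 0 p.1 + Finsupp.single 1 p.2 : Fin 2 →₀ ℕ))
  · intro d hd
    rw [Finset.mem_Iic, Finsupp.le_def] at hd
    have h1 := hd 0
    have h2 := hd 1
    simp only [Finsupp.coe_equivFunOnFinite_symm] at h1 h2
    simp only [Finset.mem_product, Finset.mem_range]
    omega
  · intro p hp
    simp only [Finset.mem_product, Finset.mem_range] at hp
    rw [Finset.mem_Iic, Finsupp.le_def]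
    intro k
    simp only [Finsupp.coe_equivFunOnFinite_symm]
    fin_cases k <;> simp <;> omega
  · intro d _
    exact (fin2_eq d).symm
  · intro p _
    simp
  · intro d _
    have : (∏ i, (![A,B] i) ^ d i) = A ^ d 0 * B ^ d 1 := by
      rw [Fin.prod_univ_two]; simp
    rw [this, cf, ← fin2_eq]

lemma subst1_coeff {τ : Type*} (B : MvPowerSeries τ R) (f : PowerSeries R)
    (e : τ →₀ ℕ) :
    MvPowerSeries.coeff (R := R) e (MvPowerSeries.substSeries (fun _ : Unit => B) f)
      = ∑ k ∈ Finset.range ((e.sum fun _ n => n)+1),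
          PowerSeries.coeff (R := R) k f * MvPowerSeries.coeff (R := R) e (B^k) := by
  set N := e.sum fun _ n => n with hN
  have h0 : MvPowerSeries.coeff (R := R) e (MvPowerSeries.substSeries (fun _ : Unit => B) f)
      = ∑ d ∈ Finset.Iic (Finsupp.equivFunOnFinite.symm fun _ : Unit => N),
        MvPowerSeries.coeff (R := R) d f * MvPowerSeries.coeff (R := R) e (∏ i : Unit, B ^ d i) := rfl
  rw [h0]
  apply Finset.sum_nbij'
    (i := fun (d : Unit →₀ ℕ) => d ())
    (j := fun (k : ℕ) => (Finsupp.single () k : Unit →₀ ℕ))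
  · intro d hd
    rw [Finset.mem_Iic, Finsupp.le_def] at hd
    have h1 := hd ()
    simp only [Finsupp.coe_equivFunOnFinite_symm] at h1
    simp only [Finset.mem_range]
    omega
  · intro k hk
    simp only [Finset.mem_range] at hk
    rw [Finset.mem_Iic, Finsupp.le_def]
    intro u
    simp only [Finsupp.coe_equivFunOnFinite_symm]
    simp
    omega
  · intro d _
    ext u
    simp
  · intro k _
    simp
  · intro d _
    have h1 : (∏ i : Unit, B ^ d i) = B ^ d () := by
      simp
    have h2 : MvPowerSeries.coeff (R := R) d f = PowerSeries.coeff (R := R) (d ()) f := by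
      have : d = Finsupp.single () (d ()) := by ext u; simp
      rw [this]
      simp only [Finsupp.single_eq_same]
      rfl
    rw [h1, h2]

lemma cf_subst (A B : MvPowerSeries (Fin 2) R) (f : MvPowerSeries (Fin 2) R) (i j : ℕ) :
    cf (MvPowerSeries.substSeries ![A, B] f) i j
      = ∑ d0 ∈ Finset.range (i+j+1), ∑ d1 ∈ Finset.range (i+j+1),
          cf f d0 d1 * cf (A^d0 * B^d1) i j := by
  rw [cf, subst2_coeff, pair_sum]
  rfl

lemma pc_mul (φ ψ : PowerSeries R) (n : ℕ) :
    PowerSeries.coeff (R := R) n (φ * ψ)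
      = ∑ p ∈ Finset.range (n+1),
          PowerSeries.coeff (R := R) p φ * PowerSeries.coeff (R := R) (n-p) ψ := by
  rw [PowerSeries.coeff_mul, Finset.Nat.sum_antidiagonal_eq_sum_range_succ_mk]

lemma pair_eq_single0 {i j k : ℕ} :
    (Finsupp.single 0 i + Finsupp.single 1 j : Fin 2 →₀ ℕ) = Finsupp.single 0 k
      ↔ i = k ∧ j = 0 := by
  rw [show (Finsupp.single 0 k : Fin 2 →₀ ℕ) = Finsupp.single 0 k + Finsupp.single 1 0 by simp]
  exact pair_eq_iff

lemma pair_eq_single1 {i j l : ℕ} :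
    (Finsupp.single 0 i + Finsupp.single 1 j : Fin 2 →₀ ℕ) = Finsupp.single 1 l
      ↔ i = 0 ∧ j = l := by
  rw [show (Finsupp.single 1 l : Fin 2 →₀ ℕ) = Finsupp.single 0 0 + Finsupp.single 1 l by simp]
  exact pair_eq_iff

lemma pair_eq_zero {i j : ℕ} :
    (Finsupp.single 0 i + Finsupp.single 1 j : Fin 2 →₀ ℕ) = 0 ↔ i = 0 ∧ j = 0 := by
  rw [show (0 : Fin 2 →₀ ℕ) = Finsupp.single 0 0 + Finsupp.single 1 0 by simp]
  exact pair_eq_iff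

lemma cf_X0pow (n i j : ℕ) :
    cf (X 0 ^ n : MvPowerSeries (Fin 2) R) i j = if i = n ∧ j = 0 then 1 else 0 := by
  rw [cf, MvPowerSeries.coeff_X_pow]
  simp only [pair_eq_single0]

lemma cf_X1pow (n i j : ℕ) :
    cf (X 1 ^ n : MvPowerSeries (Fin 2) R) i j = if i = 0 ∧ j = n then 1 else 0 := by
  rw [cf, MvPowerSeries.coeff_X_pow]
  simp only [pair_eq_single1]

lemma cf_X0 (i j : ℕ) :
    cf (X 0 : MvPowerSeries (Fin 2) R) i j = if i = 1 ∧ j = 0 then 1 else 0 := by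
  rw [← pow_one (X 0 : MvPowerSeries (Fin 2) R), cf_X0pow]

lemma cf_X1 (i j : ℕ) :
    cf (X 1 : MvPowerSeries (Fin 2) R) i j = if i = 0 ∧ j = 1 then 1 else 0 := by
  rw [← pow_one (X 1 : MvPowerSeries (Fin 2) R), cf_X1pow]

lemma cf_one (i j : ℕ) :
    cf (1 : MvPowerSeries (Fin 2) R) i j = if i = 0 ∧ j = 0 then 1 else 0 := by
  rw [cf, MvPowerSeries.coeff_one]
  simp only [pair_eq_zero]

lemma cf_C (a : R) (i j : ℕ) :
    cf (C (σ := Fin 2) (R := R) a) i j = if i = 0 ∧ j = 0 then a else 0 := by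
  rw [cf, MvPowerSeries.coeff_C]
  simp only [pair_eq_zero]

lemma cf_zero (i j : ℕ) : cf (0 : MvPowerSeries (Fin 2) R) i j = 0 := by
  rw [cf]; simp

lemma cf_add (φ ψ : MvPowerSeries (Fin 2) R) (i j : ℕ) :
    cf (φ + ψ) i j = cf φ i j + cf ψ i j := by
  rw [cf, cf, cf, map_add]

lemma cf_sub (φ ψ : MvPowerSeries (Fin 2) R) (i j : ℕ) :
    cf (φ - ψ) i j = cf φ i j - cf ψ i j := by
  rw [cf, cf, cf, map_sub]

lemma cf_J1 (ι : PowerSeries R) (i j : ℕ) :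
    cf (MvPowerSeries.substSeries (fun _ : Unit => (X 1 : MvPowerSeries (Fin 2) R)) ι) i j
      = if i = 0 then PowerSeries.coeff (R := R) j ι else 0 := by
  rw [cf, subst1_coeff, pair_sum]
  have : ∀ k, MvPowerSeries.coeff (R := R) (Finsupp.single 0 i + Finsupp.single 1 j)
      ((X 1 : MvPowerSeries (Fin 2) R) ^ k) = if i = 0 ∧ j = k then 1 else 0 :=
    fun k => cf_X1pow k i j
  simp only [this, mul_ite, mul_one, mul_zero]
  by_cases hi : i = 0
  · subst hi
    simp
  · simp [hi]

lemma cf_J0 (ι : PowerSeries R) (i j : ℕ) :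
    cf (MvPowerSeries.substSeries (fun _ : Unit => (X 0 : MvPowerSeries (Fin 2) R)) ι) i j
      = if j = 0 then PowerSeries.coeff (R := R) i ι else 0 := by
  rw [cf, subst1_coeff, pair_sum]
  have : ∀ k, MvPowerSeries.coeff (R := R) (Finsupp.single 0 i + Finsupp.single 1 j)
      ((X 0 : MvPowerSeries (Fin 2) R) ^ k) = if i = k ∧ j = 0 then 1 else 0 :=
    fun k => cf_X0pow k i j
  simp only [this, mul_ite, mul_one, mul_zero]
  by_cases hj : j = 0
  · subst hj
    simp
  · simp [hj]

lemma pcoeff_eq (k : ℕ) (f : PowerSeries R) :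
    MvPowerSeries.coeff (R := R) (Finsupp.single () k) f = PowerSeries.coeff (R := R) k f := rfl

lemma cf_X0pow_mul (a : ℕ) (ψ : MvPowerSeries (Fin 2) R) (i j : ℕ) :
    cf (X 0 ^ a * ψ) i j = if a ≤ i then cf ψ (i-a) j else 0 := by
  rw [MvPowerSeries.X_pow_eq, cf, MvPowerSeries.coeff_monomial_mul]
  have hc : ((Finsupp.single 0 a : Fin 2 →₀ ℕ) ≤ Finsupp.single 0 i + Finsupp.single 1 j) ↔ a ≤ i := by
    rw [Finsupp.single_le_iff]; simp
  split_ifs with h1 h2 h2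
  · have he : ((Finsupp.single 0 i + Finsupp.single 1 j : Fin 2 →₀ ℕ) - Finsupp.single 0 a)
        = Finsupp.single 0 (i-a) + Finsupp.single 1 j := by
      ext k
      fin_cases k <;> simp [Finsupp.tsub_apply]
    rw [one_mul, he, cf]
  · exact absurd (hc.1 h1) h2
  · exact absurd (hc.2 h2) h1
  · rfl

lemma cf_X1pow_mul (a : ℕ) (ψ : MvPowerSeries (Fin 2) R) (i j : ℕ) :
    cf (X 1 ^ a * ψ) i j = if a ≤ j then cf ψ i (j-a) else 0 := by
  rw [MvPowerSeries.X_pow_eq, cf, MvPowerSeries.coeff_monomial_mul]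
  have hc : ((Finsupp.single 1 a : Fin 2 →₀ ℕ) ≤ Finsupp.single 0 i + Finsupp.single 1 j) ↔ a ≤ j := by
    rw [Finsupp.single_le_iff]; simp
  split_ifs with h1 h2 h2
  · have he : ((Finsupp.single 0 i + Finsupp.single 1 j : Fin 2 →₀ ℕ) - Finsupp.single 1 a)
        = Finsupp.single 0 i + Finsupp.single 1 (j-a) := by
      ext k
      fin_cases k <;> simp [Finsupp.tsub_apply]
    rw [one_mul, he, cf]
  · exact absurd (hc.1 h1) h2
  · exact absurd (hc.2 h2) h1
  · rfl

lemma cf_X0_mul (ψ : MvPowerSeries (Fin 2) R) (i j : ℕ) :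
    cf (X 0 * ψ) i j = if 1 ≤ i then cf ψ (i-1) j else 0 := by
  rw [← pow_one (X 0 : MvPowerSeries (Fin 2) R), cf_X0pow_mul]

lemma cf_X1_mul (ψ : MvPowerSeries (Fin 2) R) (i j : ℕ) :
    cf (X 1 * ψ) i j = if 1 ≤ j then cf ψ i (j-1) else 0 := by
  rw [← pow_one (X 1 : MvPowerSeries (Fin 2) R), cf_X1pow_mul]

lemma pc_one (n : ℕ) :
    PowerSeries.coeff (R := R) n (1 : PowerSeries R) = if n = 0 then 1 else 0 := by
  simp [PowerSeries.coeff_one]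

lemma cf_J1pow (ι : PowerSeries R) (k i j : ℕ) :
    cf ((MvPowerSeries.substSeries (fun _ : Unit => (X 1 : MvPowerSeries (Fin 2) R)) ι) ^ k) i j
      = if i = 0 then PowerSeries.coeff (R := R) j (ι ^ k) else 0 := by
  induction k generalizing i j with
  | zero =>
    rw [pow_zero, pow_zero, cf_one, pc_one]
    by_cases hi : i = 0 <;> by_cases hj : j = 0 <;> simp [hi, hj]
  | succ k ih =>
    rw [pow_succ, pow_succ, cf_mul, pc_mul]
    simp only [ih, cf_J1]
    by_cases hi : i = 0
    · subst hi
      simp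
    · rw [if_neg hi, Finset.sum_eq_zero]
      intro p hp
      rw [Finset.sum_eq_zero]
      intro q _
      by_cases hp0 : p = 0
      · subst hp0
        simp only [Nat.sub_zero, if_neg hi, mul_zero]
      · rw [if_neg hp0, zero_mul]

lemma cf_J0pow (ι : PowerSeries R) (k i j : ℕ) :
    cf ((MvPowerSeries.substSeries (fun _ : Unit => (X 0 : MvPowerSeries (Fin 2) R)) ι) ^ k) i j
      = if j = 0 then PowerSeries.coeff (R := R) i (ι ^ k) else 0 := by
  induction k generalizing i j with
  | zero =>
    rw [pow_zero, pow_zero, cf_one, pc_one]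
    by_cases hi : i = 0 <;> by_cases hj : j = 0 <;> simp [hi, hj]
  | succ k ih =>
    rw [pow_succ, pow_succ, cf_mul, pc_mul]
    simp only [ih, cf_J0]
    by_cases hj : j = 0
    · subst hj
      simp
    · rw [if_neg hj, Finset.sum_eq_zero]
      intro p hp
      rw [Finset.sum_eq_zero]
      intro q _
      by_cases hq0 : q = 0
      · subst hq0
        simp only [Nat.sub_zero, if_neg hj, mul_zero]
      · rw [if_neg hq0, zero_mul]


lemma sumn (n : ℕ) : ((Finsupp.single () n : Unit →₀ ℕ).sum fun _ k => k) = n := by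
  rw [Finsupp.sum_fintype _ _ (fun _ => rfl)]
  simp

lemma cf_def (φ : MvPowerSeries (Fin 2) R) (i j : ℕ) :
    MvPowerSeries.coeff (R := R) (Finsupp.single 0 i + Finsupp.single 1 j) φ = cf φ i j := rfl

lemma cf_two (i j : ℕ) :
    cf (2 : MvPowerSeries (Fin 2) R) i j = if i = 0 ∧ j = 0 then 2 else 0 := by
  rw [show (2 : MvPowerSeries (Fin 2) R) = 1 + 1 from by norm_num, cf_add, cf_one]
  split_ifs <;> norm_num

lemma cf_C_mul (a : R) (ψ : MvPowerSeries (Fin 2) R) (i j : ℕ) :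
    cf (C (σ := Fin 2) (R := R) a * ψ) i j = a * cf ψ i j := by
  rw [cf, cf, MvPowerSeries.coeff_C_mul]

lemma cf_X0X1pow (a b i j : ℕ) :
    cf ((X 0 : MvPowerSeries (Fin 2) R) ^ a * X 1 ^ b) i j = if i = a ∧ j = b then 1 else 0 := by
  rw [MvPowerSeries.X_pow_eq, MvPowerSeries.X_pow_eq, MvPowerSeries.monomial_mul_monomial,
    cf, MvPowerSeries.coeff_monomial, one_mul]
  simp only [pair_eq_iff]

lemma cf_X1X0pow (a b i j : ℕ) :
    cf ((X 1 : MvPowerSeries (Fin 2) R) ^ a * X 0 ^ b) i j = if i = b ∧ j = a then 1 else 0 := by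
  rw [mul_comm, cf_X0X1pow]

end FGLAux

set_option maxHeartbeats 4000000 in
/-- Let `F` be a one-dimensional commutative formal group law over `R`,
with `a₁₁, a₁₂, a₁₃, a₂₂` the coefficients of `xy, x²y, x³y, x²y²` in `F`, `ι` its formal
inverse, `g` the unique series with `F = x + y - xy·g`, and `r` the unique series with
`F = y + x·r`. Then `r(x -_F y, y) + y·g(x -_F y, y -_F x)` and
`1 + a₁₂xy + (a₂₂ - a₁₂a₁₁)xy(x-y) + a₁₃xy(2y-x)` have equal coefficients in all total
degrees `< 4`. -/

theorem fgl_r_add_y_g_mod_deg4 {R : Type*} [CommRing R]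
    (F : MvPowerSeries (Fin 2) R) (hF : IsFormalGroupLaw R F)
    (ι : PowerSeries R) (hι : IsFormalInverse F ι)
    (a₁₁ a₁₂ a₁₃ a₂₂ : R)
    (ha₁₁ : a₁₁ = MvPowerSeries.coeff (R := R) (Finsupp.single 0 1 + Finsupp.single 1 1) F)
    (ha₁₂ : a₁₂ = MvPowerSeries.coeff (R := R) (Finsupp.single 0 2 + Finsupp.single 1 1) F)
    (ha₁₃ : a₁₃ = MvPowerSeries.coeff (R := R) (Finsupp.single 0 3 + Finsupp.single 1 1) F)
    (ha₂₂ : a₂₂ = MvPowerSeries.coeff (R := R) (Finsupp.single 0 2 + Finsupp.single 1 2) F)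
    (g : MvPowerSeries (Fin 2) R) (hg : F = X 0 + X 1 - (X 0 * X 1) * g)
    (r : MvPowerSeries (Fin 2) R) (hr : F = X 1 + X 0 * r) :
    ∀ d : Fin 2 →₀ ℕ, d 0 + d 1 < 4 →
      MvPowerSeries.coeff (R := R) d
        (MvPowerSeries.substSeries
            (![fDiff F ι, X 1] : Fin 2 → MvPowerSeries (Fin 2) R) r
          + X 1 * MvPowerSeries.substSeries
            (![fDiff F ι, fDiffSwap F ι] : Fin 2 → MvPowerSeries (Fin 2) R) g) =
      MvPowerSeries.coeff (R := R) d
        (1 + C (σ := Fin 2) (R := R) a₁₂ * (X 0 * X 1)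
          + C (σ := Fin 2) (R := R) (a₂₂ - a₁₂ * a₁₁) * (X 0 * X 1 * (X 0 - X 1))
          + C (σ := Fin 2) (R := R) a₁₃ * (X 0 * X 1 * (2 * X 1 - X 0))) := by
  -- abbreviations
  have hF11 : cf F 1 1 = a₁₁ := ha₁₁.symm
  have hF21 : cf F 2 1 = a₁₂ := ha₁₂.symm
  have hF31 : cf F 3 1 = a₁₃ := ha₁₃.symm
  have hF22 : cf F 2 2 = a₂₂ := ha₂₂.symm
  have key0 : ∀ i : ℕ, cf (MvPowerSeries.substSeries ![X 0, (0 : MvPowerSeries (Fin 2) R)] F) i 0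
      = cf (X 0) i 0 := fun i => by rw [hF.subst_zero_right]
  have key1 : ∀ j : ℕ, cf (MvPowerSeries.substSeries ![(0 : MvPowerSeries (Fin 2) R), X 1] F) 0 j
      = cf (X 1) 0 j := fun j => by rw [hF.subst_zero_left]
  have keyc : ∀ i j : ℕ, cf (MvPowerSeries.substSeries ![X 1, X 0] F) i j = cf F i j :=
    fun i j => by rw [hF.comm]
  have hF00 : cf F 0 0 = 0 := by
    have h := key0 0
    rw [cf_subst] at h
    simp [Finset.sum_range_succ, cf_X0pow, cf_X0, zero_pow, cf_zero] at h
    linear_combination h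
  have hF10 : cf F 1 0 = 1 := by
    have h := key0 1
    rw [cf_subst] at h
    simp [Finset.sum_range_succ, cf_X0pow, cf_X0, zero_pow, cf_zero, hF00] at h
    linear_combination h
  have hF20 : cf F 2 0 = 0 := by
    have h := key0 2
    rw [cf_subst] at h
    simp [Finset.sum_range_succ, cf_X0pow, cf_X0, zero_pow, cf_zero, hF00, hF10] at h
    linear_combination h
  have hF30 : cf F 3 0 = 0 := by
    have h := key0 3
    rw [cf_subst] at h
    simp [Finset.sum_range_succ, cf_X0pow, cf_X0, zero_pow, cf_zero, hF00, hF10, hF20] at h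
    linear_combination h
  have hF40 : cf F 4 0 = 0 := by
    have h := key0 4
    rw [cf_subst] at h
    simp [Finset.sum_range_succ, cf_X0pow, cf_X0, zero_pow, cf_zero, hF00, hF10, hF20, hF30] at h
    linear_combination h
  have hF01 : cf F 0 1 = 1 := by
    have h := key1 1
    rw [cf_subst] at h
    simp [Finset.sum_range_succ, cf_X1pow, cf_X1, zero_pow, cf_zero, hF00] at h
    linear_combination h
  have hF02 : cf F 0 2 = 0 := by
    have h := key1 2
    rw [cf_subst] at h
    simp [Finset.sum_range_succ, cf_X1pow, cf_X1, zero_pow, cf_zero, hF00, hF01] at h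
    linear_combination h
  have hF03 : cf F 0 3 = 0 := by
    have h := key1 3
    rw [cf_subst] at h
    simp [Finset.sum_range_succ, cf_X1pow, cf_X1, zero_pow, cf_zero, hF00, hF01, hF02] at h
    linear_combination h
  have hF12 : cf F 1 2 = a₁₂ := by
    have h := keyc 1 2
    rw [cf_subst] at h
    simp [Finset.sum_range_succ, cf_X1X0pow] at h
    rw [← hF21]
    linear_combination -h
  have hF13 : cf F 1 3 = a₁₃ := by
    have h := keyc 1 3
    rw [cf_subst] at h
    simp [Finset.sum_range_succ, cf_X1X0pow] at h
    rw [← hF31]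
    linear_combination -h
  have hι0 : PowerSeries.coeff (R := R) 0 ι = 0 := by
    rw [PowerSeries.coeff_zero_eq_constantCoeff]; exact hι.1
  have keyι : ∀ n : ℕ,
      MvPowerSeries.coeff (R := R) (Finsupp.single () n)
        (MvPowerSeries.substSeries ![PowerSeries.X, ι] F) = 0 := by
    intro n; rw [hι.2]; simp
  have hι1 : PowerSeries.coeff (R := R) 1 ι = -1 := by
    have h := keyι 1
    rw [subst2_coeff, sumn] at h
    simp only [pcoeff_eq] at h
    simp [Finset.sum_range_succ, pc_mul, PowerSeries.coeff_X_pow, PowerSeries.coeff_one,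
      pow_succ, pow_zero, hF00, hF10, hF01, hF11, hι0] at h
    linear_combination h
  have hι2 : PowerSeries.coeff (R := R) 2 ι = a₁₁ := by
    have h := keyι 2
    rw [subst2_coeff, sumn] at h
    simp only [pcoeff_eq] at h
    simp [Finset.sum_range_succ, pc_mul, PowerSeries.coeff_X_pow, PowerSeries.coeff_one,
      pow_succ, pow_zero, hF00, hF10, hF20, hF01, hF02, hF11, hF21, hF12, hι0, hι1] at h
    linear_combination h
  have hι3 : PowerSeries.coeff (R := R) 3 ι = -(a₁₁*a₁₁) := by
    have h := keyι 3
    rw [subst2_coeff, sumn] at h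
    simp only [pcoeff_eq] at h
    simp [Finset.sum_range_succ, pc_mul, PowerSeries.coeff_X_pow, PowerSeries.coeff_one,
      pow_succ, pow_zero, hF00, hF10, hF20, hF30, hF01, hF02, hF03, hF11, hF21, hF12,
      hι0, hι1, hι2] at h
    linear_combination h
  have hq20 : PowerSeries.coeff (R := R) 0 (ι^2) = 0 := by
    rw [sq, pc_mul]; simp [Finset.sum_range_succ, hι0]
  have hq21 : PowerSeries.coeff (R := R) 1 (ι^2) = 0 := by
    rw [sq, pc_mul]; simp [Finset.sum_range_succ, hι0, hι1]
  have hq22 : PowerSeries.coeff (R := R) 2 (ι^2) = 1 := by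
    rw [sq, pc_mul]; simp [Finset.sum_range_succ, hι0, hι1, hι2]; try ring
  have hq23 : PowerSeries.coeff (R := R) 3 (ι^2) = -(2*a₁₁) := by
    rw [sq, pc_mul]; simp [Finset.sum_range_succ, hι0, hι1, hι2, hι3]; try ring
  have hq30 : PowerSeries.coeff (R := R) 0 (ι^3) = 0 := by
    rw [pow_succ, pc_mul]; simp [Finset.sum_range_succ, hq20, hι0]
  have hq31 : PowerSeries.coeff (R := R) 1 (ι^3) = 0 := by
    rw [pow_succ, pc_mul]; simp [Finset.sum_range_succ, hq20, hq21, hι0, hι1]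
  have hq32 : PowerSeries.coeff (R := R) 2 (ι^3) = 0 := by
    rw [pow_succ, pc_mul]; simp [Finset.sum_range_succ, hq20, hq21, hq22, hι0, hι1, hι2]
  have hq33 : PowerSeries.coeff (R := R) 3 (ι^3) = -1 := by
    rw [pow_succ, pc_mul]
    simp [Finset.sum_range_succ, hq20, hq21, hq22, hq23, hι0, hι1, hι2, hι3]
  have hD00 : cf (fDiff F ι) 0 0 = 0 := by
    unfold fDiff
    rw [cf_subst]
    simp only [Finset.sum_range_succ, Finset.sum_range_zero]
    simp [cf_X0pow_mul, cf_X0_mul, cf_X0pow, cf_X0, cf_J1pow, cf_J1, pc_one,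
      hF00, hF10, hF20, hF30, hF01, hF02, hF03, hF11, hF21, hF12,
      hι0, hι1, hι2, hι3, hq20, hq21, hq22, hq23, hq30, hq31, hq32, hq33]
    try ring
  have hD10 : cf (fDiff F ι) 1 0 = 1 := by
    unfold fDiff
    rw [cf_subst]
    simp only [Finset.sum_range_succ, Finset.sum_range_zero]
    simp [cf_X0pow_mul, cf_X0_mul, cf_X0pow, cf_X0, cf_J1pow, cf_J1, pc_one,
      hF00, hF10, hF20, hF30, hF01, hF02, hF03, hF11, hF21, hF12,
      hι0, hι1, hι2, hι3, hq20, hq21, hq22, hq23, hq30, hq31, hq32, hq33]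
    try ring
  have hD01 : cf (fDiff F ι) 0 1 = -1 := by
    unfold fDiff
    rw [cf_subst]
    simp only [Finset.sum_range_succ, Finset.sum_range_zero]
    simp [cf_X0pow_mul, cf_X0_mul, cf_X0pow, cf_X0, cf_J1pow, cf_J1, pc_one,
      hF00, hF10, hF20, hF30, hF01, hF02, hF03, hF11, hF21, hF12,
      hι0, hι1, hι2, hι3, hq20, hq21, hq22, hq23, hq30, hq31, hq32, hq33]
    try ring
  have hD20 : cf (fDiff F ι) 2 0 = 0 := by
    unfold fDiff
    rw [cf_subst]
    simp only [Finset.sum_range_succ, Finset.sum_range_zero]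
    simp [cf_X0pow_mul, cf_X0_mul, cf_X0pow, cf_X0, cf_J1pow, cf_J1, pc_one,
      hF00, hF10, hF20, hF30, hF01, hF02, hF03, hF11, hF21, hF12,
      hι0, hι1, hι2, hι3, hq20, hq21, hq22, hq23, hq30, hq31, hq32, hq33]
    try ring
  have hD11 : cf (fDiff F ι) 1 1 = -a₁₁ := by
    unfold fDiff
    rw [cf_subst]
    simp only [Finset.sum_range_succ, Finset.sum_range_zero]
    simp [cf_X0pow_mul, cf_X0_mul, cf_X0pow, cf_X0, cf_J1pow, cf_J1, pc_one,
      hF00, hF10, hF20, hF30, hF01, hF02, hF03, hF11, hF21, hF12,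
      hι0, hι1, hι2, hι3, hq20, hq21, hq22, hq23, hq30, hq31, hq32, hq33]
    try ring
  have hD02 : cf (fDiff F ι) 0 2 = a₁₁ := by
    unfold fDiff
    rw [cf_subst]
    simp only [Finset.sum_range_succ, Finset.sum_range_zero]
    simp [cf_X0pow_mul, cf_X0_mul, cf_X0pow, cf_X0, cf_J1pow, cf_J1, pc_one,
      hF00, hF10, hF20, hF30, hF01, hF02, hF03, hF11, hF21, hF12,
      hι0, hι1, hι2, hι3, hq20, hq21, hq22, hq23, hq30, hq31, hq32, hq33]
    try ring
  have hD30 : cf (fDiff F ι) 3 0 = 0 := by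
    unfold fDiff
    rw [cf_subst]
    simp only [Finset.sum_range_succ, Finset.sum_range_zero]
    simp [cf_X0pow_mul, cf_X0_mul, cf_X0pow, cf_X0, cf_J1pow, cf_J1, pc_one,
      hF00, hF10, hF20, hF30, hF01, hF02, hF03, hF11, hF21, hF12,
      hι0, hι1, hι2, hι3, hq20, hq21, hq22, hq23, hq30, hq31, hq32, hq33]
    try ring
  have hD21 : cf (fDiff F ι) 2 1 = -a₁₂ := by
    unfold fDiff
    rw [cf_subst]
    simp only [Finset.sum_range_succ, Finset.sum_range_zero]
    simp [cf_X0pow_mul, cf_X0_mul, cf_X0pow, cf_X0, cf_J1pow, cf_J1, pc_one,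
      hF00, hF10, hF20, hF30, hF01, hF02, hF03, hF11, hF21, hF12,
      hι0, hι1, hι2, hι3, hq20, hq21, hq22, hq23, hq30, hq31, hq32, hq33]
    try ring
  have hD12 : cf (fDiff F ι) 1 2 = a₁₁*a₁₁+a₁₂ := by
    unfold fDiff
    rw [cf_subst]
    simp only [Finset.sum_range_succ, Finset.sum_range_zero]
    simp [cf_X0pow_mul, cf_X0_mul, cf_X0pow, cf_X0, cf_J1pow, cf_J1, pc_one,
      hF00, hF10, hF20, hF30, hF01, hF02, hF03, hF11, hF21, hF12,
      hι0, hι1, hι2, hι3, hq20, hq21, hq22, hq23, hq30, hq31, hq32, hq33]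
    try ring
  have hD03 : cf (fDiff F ι) 0 3 = -(a₁₁*a₁₁) := by
    unfold fDiff
    rw [cf_subst]
    simp only [Finset.sum_range_succ, Finset.sum_range_zero]
    simp [cf_X0pow_mul, cf_X0_mul, cf_X0pow, cf_X0, cf_J1pow, cf_J1, pc_one,
      hF00, hF10, hF20, hF30, hF01, hF02, hF03, hF11, hF21, hF12,
      hι0, hι1, hι2, hι3, hq20, hq21, hq22, hq23, hq30, hq31, hq32, hq33]
    try ring
  have hE00 : cf (fDiffSwap F ι) 0 0 = 0 := by
    unfold fDiffSwap
    rw [cf_subst]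
    simp only [Finset.sum_range_succ, Finset.sum_range_zero]
    simp [cf_X1pow_mul, cf_X1_mul, cf_X1pow, cf_X1, cf_J0pow, cf_J0, pc_one,
      hF00, hF10, hF20, hF30, hF01, hF02, hF03, hF11, hF21, hF12,
      hι0, hι1, hι2, hι3, hq20, hq21, hq22, hq23, hq30, hq31, hq32, hq33]
    try ring
  have hE10 : cf (fDiffSwap F ι) 1 0 = -1 := by
    unfold fDiffSwap
    rw [cf_subst]
    simp only [Finset.sum_range_succ, Finset.sum_range_zero]
    simp [cf_X1pow_mul, cf_X1_mul, cf_X1pow, cf_X1, cf_J0pow, cf_J0, pc_one,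
      hF00, hF10, hF20, hF30, hF01, hF02, hF03, hF11, hF21, hF12,
      hι0, hι1, hι2, hι3, hq20, hq21, hq22, hq23, hq30, hq31, hq32, hq33]
    try ring
  have hE01 : cf (fDiffSwap F ι) 0 1 = 1 := by
    unfold fDiffSwap
    rw [cf_subst]
    simp only [Finset.sum_range_succ, Finset.sum_range_zero]
    simp [cf_X1pow_mul, cf_X1_mul, cf_X1pow, cf_X1, cf_J0pow, cf_J0, pc_one,
      hF00, hF10, hF20, hF30, hF01, hF02, hF03, hF11, hF21, hF12,
      hι0, hι1, hι2, hι3, hq20, hq21, hq22, hq23, hq30, hq31, hq32, hq33]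
    try ring
  have hE20 : cf (fDiffSwap F ι) 2 0 = a₁₁ := by
    unfold fDiffSwap
    rw [cf_subst]
    simp only [Finset.sum_range_succ, Finset.sum_range_zero]
    simp [cf_X1pow_mul, cf_X1_mul, cf_X1pow, cf_X1, cf_J0pow, cf_J0, pc_one,
      hF00, hF10, hF20, hF30, hF01, hF02, hF03, hF11, hF21, hF12,
      hι0, hι1, hι2, hι3, hq20, hq21, hq22, hq23, hq30, hq31, hq32, hq33]
    try ring
  have hE11 : cf (fDiffSwap F ι) 1 1 = -a₁₁ := by
    unfold fDiffSwap
    rw [cf_subst]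
    simp only [Finset.sum_range_succ, Finset.sum_range_zero]
    simp [cf_X1pow_mul, cf_X1_mul, cf_X1pow, cf_X1, cf_J0pow, cf_J0, pc_one,
      hF00, hF10, hF20, hF30, hF01, hF02, hF03, hF11, hF21, hF12,
      hι0, hι1, hι2, hι3, hq20, hq21, hq22, hq23, hq30, hq31, hq32, hq33]
    try ring
  have hE02 : cf (fDiffSwap F ι) 0 2 = 0 := by
    unfold fDiffSwap
    rw [cf_subst]
    simp only [Finset.sum_range_succ, Finset.sum_range_zero]
    simp [cf_X1pow_mul, cf_X1_mul, cf_X1pow, cf_X1, cf_J0pow, cf_J0, pc_one,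
      hF00, hF10, hF20, hF30, hF01, hF02, hF03, hF11, hF21, hF12,
      hι0, hι1, hι2, hι3, hq20, hq21, hq22, hq23, hq30, hq31, hq32, hq33]
    try ring
  have hE30 : cf (fDiffSwap F ι) 3 0 = -(a₁₁*a₁₁) := by
    unfold fDiffSwap
    rw [cf_subst]
    simp only [Finset.sum_range_succ, Finset.sum_range_zero]
    simp [cf_X1pow_mul, cf_X1_mul, cf_X1pow, cf_X1, cf_J0pow, cf_J0, pc_one,
      hF00, hF10, hF20, hF30, hF01, hF02, hF03, hF11, hF21, hF12,
      hι0, hι1, hι2, hι3, hq20, hq21, hq22, hq23, hq30, hq31, hq32, hq33]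
    try ring
  have hE21 : cf (fDiffSwap F ι) 2 1 = a₁₁*a₁₁+a₁₂ := by
    unfold fDiffSwap
    rw [cf_subst]
    simp only [Finset.sum_range_succ, Finset.sum_range_zero]
    simp [cf_X1pow_mul, cf_X1_mul, cf_X1pow, cf_X1, cf_J0pow, cf_J0, pc_one,
      hF00, hF10, hF20, hF30, hF01, hF02, hF03, hF11, hF21, hF12,
      hι0, hι1, hι2, hι3, hq20, hq21, hq22, hq23, hq30, hq31, hq32, hq33]
    try ring
  have hE12 : cf (fDiffSwap F ι) 1 2 = -a₁₂ := by
    unfold fDiffSwap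
    rw [cf_subst]
    simp only [Finset.sum_range_succ, Finset.sum_range_zero]
    simp [cf_X1pow_mul, cf_X1_mul, cf_X1pow, cf_X1, cf_J0pow, cf_J0, pc_one,
      hF00, hF10, hF20, hF30, hF01, hF02, hF03, hF11, hF21, hF12,
      hι0, hι1, hι2, hι3, hq20, hq21, hq22, hq23, hq30, hq31, hq32, hq33]
    try ring
  have hE03 : cf (fDiffSwap F ι) 0 3 = 0 := by
    unfold fDiffSwap
    rw [cf_subst]
    simp only [Finset.sum_range_succ, Finset.sum_range_zero]
    simp [cf_X1pow_mul, cf_X1_mul, cf_X1pow, cf_X1, cf_J0pow, cf_J0, pc_one,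
      hF00, hF10, hF20, hF30, hF01, hF02, hF03, hF11, hF21, hF12,
      hι0, hι1, hι2, hι3, hq20, hq21, hq22, hq23, hq30, hq31, hq32, hq33]
    try ring
  have hDD00 : cf ((fDiff F ι)^2) 0 0 = 0 := by
    rw [sq, cf_mul]
    simp [Finset.sum_range_succ, hD00, hD10, hD01, hD20, hD11, hD02, hD30, hD21, hD12, hD03]
    try ring
  have hDD10 : cf ((fDiff F ι)^2) 1 0 = 0 := by
    rw [sq, cf_mul]
    simp [Finset.sum_range_succ, hD00, hD10, hD01, hD20, hD11, hD02, hD30, hD21, hD12, hD03]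
    try ring
  have hDD01 : cf ((fDiff F ι)^2) 0 1 = 0 := by
    rw [sq, cf_mul]
    simp [Finset.sum_range_succ, hD00, hD10, hD01, hD20, hD11, hD02, hD30, hD21, hD12, hD03]
    try ring
  have hDD20 : cf ((fDiff F ι)^2) 2 0 = 1 := by
    rw [sq, cf_mul]
    simp [Finset.sum_range_succ, hD00, hD10, hD01, hD20, hD11, hD02, hD30, hD21, hD12, hD03]
    try ring
  have hDD11 : cf ((fDiff F ι)^2) 1 1 = -2 := by
    rw [sq, cf_mul]
    simp [Finset.sum_range_succ, hD00, hD10, hD01, hD20, hD11, hD02, hD30, hD21, hD12, hD03]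
    try ring
  have hDD02 : cf ((fDiff F ι)^2) 0 2 = 1 := by
    rw [sq, cf_mul]
    simp [Finset.sum_range_succ, hD00, hD10, hD01, hD20, hD11, hD02, hD30, hD21, hD12, hD03]
    try ring
  have hDD30 : cf ((fDiff F ι)^2) 3 0 = 0 := by
    rw [sq, cf_mul]
    simp [Finset.sum_range_succ, hD00, hD10, hD01, hD20, hD11, hD02, hD30, hD21, hD12, hD03]
    try ring
  have hDD21 : cf ((fDiff F ι)^2) 2 1 = -(2*a₁₁) := by
    rw [sq, cf_mul]
    simp [Finset.sum_range_succ, hD00, hD10, hD01, hD20, hD11, hD02, hD30, hD21, hD12, hD03]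
    try ring
  have hDD12 : cf ((fDiff F ι)^2) 1 2 = 4*a₁₁ := by
    rw [sq, cf_mul]
    simp [Finset.sum_range_succ, hD00, hD10, hD01, hD20, hD11, hD02, hD30, hD21, hD12, hD03]
    try ring
  have hDD03 : cf ((fDiff F ι)^2) 0 3 = -(2*a₁₁) := by
    rw [sq, cf_mul]
    simp [Finset.sum_range_succ, hD00, hD10, hD01, hD20, hD11, hD02, hD30, hD21, hD12, hD03]
    try ring
  have hD300 : cf ((fDiff F ι)^3) 0 0 = 0 := by
    rw [pow_succ, cf_mul]
    simp [Finset.sum_range_succ, hDD00, hDD10, hDD01, hDD20, hDD11, hDD02, hDD30, hDD21, hDD12, hDD03, hD00, hD10, hD01, hD20, hD11, hD02, hD30, hD21, hD12, hD03]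
    try ring
  have hD310 : cf ((fDiff F ι)^3) 1 0 = 0 := by
    rw [pow_succ, cf_mul]
    simp [Finset.sum_range_succ, hDD00, hDD10, hDD01, hDD20, hDD11, hDD02, hDD30, hDD21, hDD12, hDD03, hD00, hD10, hD01, hD20, hD11, hD02, hD30, hD21, hD12, hD03]
    try ring
  have hD301 : cf ((fDiff F ι)^3) 0 1 = 0 := by
    rw [pow_succ, cf_mul]
    simp [Finset.sum_range_succ, hDD00, hDD10, hDD01, hDD20, hDD11, hDD02, hDD30, hDD21, hDD12, hDD03, hD00, hD10, hD01, hD20, hD11, hD02, hD30, hD21, hD12, hD03]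
    try ring
  have hD320 : cf ((fDiff F ι)^3) 2 0 = 0 := by
    rw [pow_succ, cf_mul]
    simp [Finset.sum_range_succ, hDD00, hDD10, hDD01, hDD20, hDD11, hDD02, hDD30, hDD21, hDD12, hDD03, hD00, hD10, hD01, hD20, hD11, hD02, hD30, hD21, hD12, hD03]
    try ring
  have hD311 : cf ((fDiff F ι)^3) 1 1 = 0 := by
    rw [pow_succ, cf_mul]
    simp [Finset.sum_range_succ, hDD00, hDD10, hDD01, hDD20, hDD11, hDD02, hDD30, hDD21, hDD12, hDD03, hD00, hD10, hD01, hD20, hD11, hD02, hD30, hD21, hD12, hD03]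
    try ring
  have hD302 : cf ((fDiff F ι)^3) 0 2 = 0 := by
    rw [pow_succ, cf_mul]
    simp [Finset.sum_range_succ, hDD00, hDD10, hDD01, hDD20, hDD11, hDD02, hDD30, hDD21, hDD12, hDD03, hD00, hD10, hD01, hD20, hD11, hD02, hD30, hD21, hD12, hD03]
    try ring
  have hD330 : cf ((fDiff F ι)^3) 3 0 = 1 := by
    rw [pow_succ, cf_mul]
    simp [Finset.sum_range_succ, hDD00, hDD10, hDD01, hDD20, hDD11, hDD02, hDD30, hDD21, hDD12, hDD03, hD00, hD10, hD01, hD20, hD11, hD02, hD30, hD21, hD12, hD03]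
    try ring
  have hD321 : cf ((fDiff F ι)^3) 2 1 = -3 := by
    rw [pow_succ, cf_mul]
    simp [Finset.sum_range_succ, hDD00, hDD10, hDD01, hDD20, hDD11, hDD02, hDD30, hDD21, hDD12, hDD03, hD00, hD10, hD01, hD20, hD11, hD02, hD30, hD21, hD12, hD03]
    try ring
  have hD312 : cf ((fDiff F ι)^3) 1 2 = 3 := by
    rw [pow_succ, cf_mul]
    simp [Finset.sum_range_succ, hDD00, hDD10, hDD01, hDD20, hDD11, hDD02, hDD30, hDD21, hDD12, hDD03, hD00, hD10, hD01, hD20, hD11, hD02, hD30, hD21, hD12, hD03]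
    try ring
  have hD303 : cf ((fDiff F ι)^3) 0 3 = -1 := by
    rw [pow_succ, cf_mul]
    simp [Finset.sum_range_succ, hDD00, hDD10, hDD01, hDD20, hDD11, hDD02, hDD30, hDD21, hDD12, hDD03, hD00, hD10, hD01, hD20, hD11, hD02, hD30, hD21, hD12, hD03]
    try ring
  have hEE00 : cf ((fDiffSwap F ι)^2) 0 0 = 0 := by
    rw [sq, cf_mul]
    simp [Finset.sum_range_succ, hE00, hE10, hE01, hE20, hE11, hE02, hE30, hE21, hE12, hE03]
    try ring
  have hEE10 : cf ((fDiffSwap F ι)^2) 1 0 = 0 := by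
    rw [sq, cf_mul]
    simp [Finset.sum_range_succ, hE00, hE10, hE01, hE20, hE11, hE02, hE30, hE21, hE12, hE03]
    try ring
  have hEE01 : cf ((fDiffSwap F ι)^2) 0 1 = 0 := by
    rw [sq, cf_mul]
    simp [Finset.sum_range_succ, hE00, hE10, hE01, hE20, hE11, hE02, hE30, hE21, hE12, hE03]
    try ring
  have hEE20 : cf ((fDiffSwap F ι)^2) 2 0 = 1 := by
    rw [sq, cf_mul]
    simp [Finset.sum_range_succ, hE00, hE10, hE01, hE20, hE11, hE02, hE30, hE21, hE12, hE03]
    try ring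
  have hEE11 : cf ((fDiffSwap F ι)^2) 1 1 = -2 := by
    rw [sq, cf_mul]
    simp [Finset.sum_range_succ, hE00, hE10, hE01, hE20, hE11, hE02, hE30, hE21, hE12, hE03]
    try ring
  have hEE02 : cf ((fDiffSwap F ι)^2) 0 2 = 1 := by
    rw [sq, cf_mul]
    simp [Finset.sum_range_succ, hE00, hE10, hE01, hE20, hE11, hE02, hE30, hE21, hE12, hE03]
    try ring
  have hE300 : cf ((fDiffSwap F ι)^3) 0 0 = 0 := by
    rw [pow_succ, cf_mul]
    simp [Finset.sum_range_succ, hEE00, hEE10, hEE01, hEE20, hEE11, hEE02, hE00, hE10, hE01, hE20, hE11, hE02, hE30, hE21, hE12, hE03]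
    try ring
  have hE310 : cf ((fDiffSwap F ι)^3) 1 0 = 0 := by
    rw [pow_succ, cf_mul]
    simp [Finset.sum_range_succ, hEE00, hEE10, hEE01, hEE20, hEE11, hEE02, hE00, hE10, hE01, hE20, hE11, hE02, hE30, hE21, hE12, hE03]
    try ring
  have hE301 : cf ((fDiffSwap F ι)^3) 0 1 = 0 := by
    rw [pow_succ, cf_mul]
    simp [Finset.sum_range_succ, hEE00, hEE10, hEE01, hEE20, hEE11, hEE02, hE00, hE10, hE01, hE20, hE11, hE02, hE30, hE21, hE12, hE03]
    try ring
  have hE320 : cf ((fDiffSwap F ι)^3) 2 0 = 0 := by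
    rw [pow_succ, cf_mul]
    simp [Finset.sum_range_succ, hEE00, hEE10, hEE01, hEE20, hEE11, hEE02, hE00, hE10, hE01, hE20, hE11, hE02, hE30, hE21, hE12, hE03]
    try ring
  have hE311 : cf ((fDiffSwap F ι)^3) 1 1 = 0 := by
    rw [pow_succ, cf_mul]
    simp [Finset.sum_range_succ, hEE00, hEE10, hEE01, hEE20, hEE11, hEE02, hE00, hE10, hE01, hE20, hE11, hE02, hE30, hE21, hE12, hE03]
    try ring
  have hE302 : cf ((fDiffSwap F ι)^3) 0 2 = 0 := by
    rw [pow_succ, cf_mul]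
    simp [Finset.sum_range_succ, hEE00, hEE10, hEE01, hEE20, hEE11, hEE02, hE00, hE10, hE01, hE20, hE11, hE02, hE30, hE21, hE12, hE03]
    try ring
  have hr00 : cf r 0 0 = 1 := by
    have h : cf F 1 0 = cf (X 1 + X 0 * r) 1 0 := by rw [← hr]
    rw [hF10] at h
    simp [cf_add, cf_X1, cf_X0_mul] at h
    linear_combination -h
  have hr10 : cf r 1 0 = 0 := by
    have h : cf F 2 0 = cf (X 1 + X 0 * r) 2 0 := by rw [← hr]
    rw [hF20] at h
    simp [cf_add, cf_X1, cf_X0_mul] at h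
    linear_combination -h
  have hr01 : cf r 0 1 = a₁₁ := by
    have h : cf F 1 1 = cf (X 1 + X 0 * r) 1 1 := by rw [← hr]
    rw [hF11] at h
    simp [cf_add, cf_X1, cf_X0_mul] at h
    linear_combination -h
  have hr20 : cf r 2 0 = 0 := by
    have h : cf F 3 0 = cf (X 1 + X 0 * r) 3 0 := by rw [← hr]
    rw [hF30] at h
    simp [cf_add, cf_X1, cf_X0_mul] at h
    linear_combination -h
  have hr11 : cf r 1 1 = a₁₂ := by
    have h : cf F 2 1 = cf (X 1 + X 0 * r) 2 1 := by rw [← hr]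
    rw [hF21] at h
    simp [cf_add, cf_X1, cf_X0_mul] at h
    linear_combination -h
  have hr02 : cf r 0 2 = a₁₂ := by
    have h : cf F 1 2 = cf (X 1 + X 0 * r) 1 2 := by rw [← hr]
    rw [hF12] at h
    simp [cf_add, cf_X1, cf_X0_mul] at h
    linear_combination -h
  have hr30 : cf r 3 0 = 0 := by
    have h : cf F 4 0 = cf (X 1 + X 0 * r) 4 0 := by rw [← hr]
    rw [hF40] at h
    simp [cf_add, cf_X1, cf_X0_mul] at h
    linear_combination -h
  have hr21 : cf r 2 1 = a₁₃ := by
    have h : cf F 3 1 = cf (X 1 + X 0 * r) 3 1 := by rw [← hr]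
    rw [hF31] at h
    simp [cf_add, cf_X1, cf_X0_mul] at h
    linear_combination -h
  have hr12 : cf r 1 2 = a₂₂ := by
    have h : cf F 2 2 = cf (X 1 + X 0 * r) 2 2 := by rw [← hr]
    rw [hF22] at h
    simp [cf_add, cf_X1, cf_X0_mul] at h
    linear_combination -h
  have hr03 : cf r 0 3 = a₁₃ := by
    have h : cf F 1 3 = cf (X 1 + X 0 * r) 1 3 := by rw [← hr]
    rw [hF13] at h
    simp [cf_add, cf_X1, cf_X0_mul] at h
    linear_combination -h
  have hg00 : cf g 0 0 = -a₁₁ := by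
    have h : cf F 1 1 = cf (X 0 + X 1 - X 0 * X 1 * g) 1 1 := by rw [← hg]
    rw [hF11] at h
    simp [cf_add, cf_sub, cf_X0, cf_X1, mul_assoc, cf_X0_mul, cf_X1_mul] at h
    linear_combination h
  have hg10 : cf g 1 0 = -a₁₂ := by
    have h : cf F 2 1 = cf (X 0 + X 1 - X 0 * X 1 * g) 2 1 := by rw [← hg]
    rw [hF21] at h
    simp [cf_add, cf_sub, cf_X0, cf_X1, mul_assoc, cf_X0_mul, cf_X1_mul] at h
    linear_combination h
  have hg01 : cf g 0 1 = -a₁₂ := by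
    have h : cf F 1 2 = cf (X 0 + X 1 - X 0 * X 1 * g) 1 2 := by rw [← hg]
    rw [hF12] at h
    simp [cf_add, cf_sub, cf_X0, cf_X1, mul_assoc, cf_X0_mul, cf_X1_mul] at h
    linear_combination h
  have hg20 : cf g 2 0 = -a₁₃ := by
    have h : cf F 3 1 = cf (X 0 + X 1 - X 0 * X 1 * g) 3 1 := by rw [← hg]
    rw [hF31] at h
    simp [cf_add, cf_sub, cf_X0, cf_X1, mul_assoc, cf_X0_mul, cf_X1_mul] at h
    linear_combination h
  have hg11 : cf g 1 1 = -a₂₂ := by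
    have h : cf F 2 2 = cf (X 0 + X 1 - X 0 * X 1 * g) 2 2 := by rw [← hg]
    rw [hF22] at h
    simp [cf_add, cf_sub, cf_X0, cf_X1, mul_assoc, cf_X0_mul, cf_X1_mul] at h
    linear_combination h
  have hg02 : cf g 0 2 = -a₁₃ := by
    have h : cf F 1 3 = cf (X 0 + X 1 - X 0 * X 1 * g) 1 3 := by rw [← hg]
    rw [hF13] at h
    simp [cf_add, cf_sub, cf_X0, cf_X1, mul_assoc, cf_X0_mul, cf_X1_mul] at h
    linear_combination h
  have hT00 : cf (MvPowerSeries.substSeries ![fDiff F ι, X 1] r) 0 0 = 1 := by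
    rw [cf_subst]
    simp only [Finset.sum_range_succ, Finset.sum_range_zero]
    simp [cf_mul, cf_X1pow, cf_X1, cf_one, Finset.sum_range_succ, hD00, hD10, hD01, hD20, hD11, hD02, hD30, hD21, hD12, hD03, hDD00, hDD10, hDD01, hDD20, hDD11, hDD02, hDD30, hDD21, hDD12, hDD03, hD300, hD310, hD301, hD320, hD311, hD302, hD330, hD321, hD312, hD303, hr00, hr10, hr01, hr20, hr11, hr02, hr30, hr21, hr12, hr03]
    try ring
  have hT10 : cf (MvPowerSeries.substSeries ![fDiff F ι, X 1] r) 1 0 = 0 := by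
    rw [cf_subst]
    simp only [Finset.sum_range_succ, Finset.sum_range_zero]
    simp [cf_mul, cf_X1pow, cf_X1, cf_one, Finset.sum_range_succ, hD00, hD10, hD01, hD20, hD11, hD02, hD30, hD21, hD12, hD03, hDD00, hDD10, hDD01, hDD20, hDD11, hDD02, hDD30, hDD21, hDD12, hDD03, hD300, hD310, hD301, hD320, hD311, hD302, hD330, hD321, hD312, hD303, hr00, hr10, hr01, hr20, hr11, hr02, hr30, hr21, hr12, hr03]
    try ring
  have hT01 : cf (MvPowerSeries.substSeries ![fDiff F ι, X 1] r) 0 1 = a₁₁ := by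
    rw [cf_subst]
    simp only [Finset.sum_range_succ, Finset.sum_range_zero]
    simp [cf_mul, cf_X1pow, cf_X1, cf_one, Finset.sum_range_succ, hD00, hD10, hD01, hD20, hD11, hD02, hD30, hD21, hD12, hD03, hDD00, hDD10, hDD01, hDD20, hDD11, hDD02, hDD30, hDD21, hDD12, hDD03, hD300, hD310, hD301, hD320, hD311, hD302, hD330, hD321, hD312, hD303, hr00, hr10, hr01, hr20, hr11, hr02, hr30, hr21, hr12, hr03]
    try ring
  have hT20 : cf (MvPowerSeries.substSeries ![fDiff F ι, X 1] r) 2 0 = 0 := by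
    rw [cf_subst]
    simp only [Finset.sum_range_succ, Finset.sum_range_zero]
    simp [cf_mul, cf_X1pow, cf_X1, cf_one, Finset.sum_range_succ, hD00, hD10, hD01, hD20, hD11, hD02, hD30, hD21, hD12, hD03, hDD00, hDD10, hDD01, hDD20, hDD11, hDD02, hDD30, hDD21, hDD12, hDD03, hD300, hD310, hD301, hD320, hD311, hD302, hD330, hD321, hD312, hD303, hr00, hr10, hr01, hr20, hr11, hr02, hr30, hr21, hr12, hr03]
    try ring
  have hT11 : cf (MvPowerSeries.substSeries ![fDiff F ι, X 1] r) 1 1 = a₁₂ := by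
    rw [cf_subst]
    simp only [Finset.sum_range_succ, Finset.sum_range_zero]
    simp [cf_mul, cf_X1pow, cf_X1, cf_one, Finset.sum_range_succ, hD00, hD10, hD01, hD20, hD11, hD02, hD30, hD21, hD12, hD03, hDD00, hDD10, hDD01, hDD20, hDD11, hDD02, hDD30, hDD21, hDD12, hDD03, hD300, hD310, hD301, hD320, hD311, hD302, hD330, hD321, hD312, hD303, hr00, hr10, hr01, hr20, hr11, hr02, hr30, hr21, hr12, hr03]
    try ring
  have hT02 : cf (MvPowerSeries.substSeries ![fDiff F ι, X 1] r) 0 2 = 0 := by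
    rw [cf_subst]
    simp only [Finset.sum_range_succ, Finset.sum_range_zero]
    simp [cf_mul, cf_X1pow, cf_X1, cf_one, Finset.sum_range_succ, hD00, hD10, hD01, hD20, hD11, hD02, hD30, hD21, hD12, hD03, hDD00, hDD10, hDD01, hDD20, hDD11, hDD02, hDD30, hDD21, hDD12, hDD03, hD300, hD310, hD301, hD320, hD311, hD302, hD330, hD321, hD312, hD303, hr00, hr10, hr01, hr20, hr11, hr02, hr30, hr21, hr12, hr03]
    try ring
  have hT30 : cf (MvPowerSeries.substSeries ![fDiff F ι, X 1] r) 3 0 = 0 := by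
    rw [cf_subst]
    simp only [Finset.sum_range_succ, Finset.sum_range_zero]
    simp [cf_mul, cf_X1pow, cf_X1, cf_one, Finset.sum_range_succ, hD00, hD10, hD01, hD20, hD11, hD02, hD30, hD21, hD12, hD03, hDD00, hDD10, hDD01, hDD20, hDD11, hDD02, hDD30, hDD21, hDD12, hDD03, hD300, hD310, hD301, hD320, hD311, hD302, hD330, hD321, hD312, hD303, hr00, hr10, hr01, hr20, hr11, hr02, hr30, hr21, hr12, hr03]
    try ring
  have hT21 : cf (MvPowerSeries.substSeries ![fDiff F ι, X 1] r) 2 1 = a₁₃ := by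
    rw [cf_subst]
    simp only [Finset.sum_range_succ, Finset.sum_range_zero]
    simp [cf_mul, cf_X1pow, cf_X1, cf_one, Finset.sum_range_succ, hD00, hD10, hD01, hD20, hD11, hD02, hD30, hD21, hD12, hD03, hDD00, hDD10, hDD01, hDD20, hDD11, hDD02, hDD30, hDD21, hDD12, hDD03, hD300, hD310, hD301, hD320, hD311, hD302, hD330, hD321, hD312, hD303, hr00, hr10, hr01, hr20, hr11, hr02, hr30, hr21, hr12, hr03]
    try ring
  have hT12 : cf (MvPowerSeries.substSeries ![fDiff F ι, X 1] r) 1 2 = a₂₂ - a₁₁*a₁₂ - 2*a₁₃ := by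
    rw [cf_subst]
    simp only [Finset.sum_range_succ, Finset.sum_range_zero]
    simp [cf_mul, cf_X1pow, cf_X1, cf_one, Finset.sum_range_succ, hD00, hD10, hD01, hD20, hD11, hD02, hD30, hD21, hD12, hD03, hDD00, hDD10, hDD01, hDD20, hDD11, hDD02, hDD30, hDD21, hDD12, hDD03, hD300, hD310, hD301, hD320, hD311, hD302, hD330, hD321, hD312, hD303, hr00, hr10, hr01, hr20, hr11, hr02, hr30, hr21, hr12, hr03]
    try ring
  have hT03 : cf (MvPowerSeries.substSeries ![fDiff F ι, X 1] r) 0 3 = a₁₁*a₁₂ + 2*a₁₃ - a₂₂ := by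
    rw [cf_subst]
    simp only [Finset.sum_range_succ, Finset.sum_range_zero]
    simp [cf_mul, cf_X1pow, cf_X1, cf_one, Finset.sum_range_succ, hD00, hD10, hD01, hD20, hD11, hD02, hD30, hD21, hD12, hD03, hDD00, hDD10, hDD01, hDD20, hDD11, hDD02, hDD30, hDD21, hDD12, hDD03, hD300, hD310, hD301, hD320, hD311, hD302, hD330, hD321, hD312, hD303, hr00, hr10, hr01, hr20, hr11, hr02, hr30, hr21, hr12, hr03]
    try ring
  have hU00 : cf (MvPowerSeries.substSeries ![fDiff F ι, fDiffSwap F ι] g) 0 0 = -a₁₁ := by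
    rw [cf_subst]
    simp only [Finset.sum_range_succ, Finset.sum_range_zero]
    simp [cf_mul, cf_one, Finset.sum_range_succ, hD00, hD10, hD01, hD20, hD11, hD02, hD30, hD21, hD12, hD03, hDD00, hDD10, hDD01, hDD20, hDD11, hDD02, hDD30, hDD21, hDD12, hDD03, hD300, hD310, hD301, hD320, hD311, hD302, hD330, hD321, hD312, hD303, hE00, hE10, hE01, hE20, hE11, hE02, hE30, hE21, hE12, hE03, hEE00, hEE10, hEE01, hEE20, hEE11, hEE02, hE300, hE310, hE301, hE320, hE311, hE302, hg00, hg10, hg01, hg20, hg11, hg02]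
    try ring
  have hU10 : cf (MvPowerSeries.substSeries ![fDiff F ι, fDiffSwap F ι] g) 1 0 = 0 := by
    rw [cf_subst]
    simp only [Finset.sum_range_succ, Finset.sum_range_zero]
    simp [cf_mul, cf_one, Finset.sum_range_succ, hD00, hD10, hD01, hD20, hD11, hD02, hD30, hD21, hD12, hD03, hDD00, hDD10, hDD01, hDD20, hDD11, hDD02, hDD30, hDD21, hDD12, hDD03, hD300, hD310, hD301, hD320, hD311, hD302, hD330, hD321, hD312, hD303, hE00, hE10, hE01, hE20, hE11, hE02, hE30, hE21, hE12, hE03, hEE00, hEE10, hEE01, hEE20, hEE11, hEE02, hE300, hE310, hE301, hE320, hE311, hE302, hg00, hg10, hg01, hg20, hg11, hg02]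
    try ring
  have hU01 : cf (MvPowerSeries.substSeries ![fDiff F ι, fDiffSwap F ι] g) 0 1 = 0 := by
    rw [cf_subst]
    simp only [Finset.sum_range_succ, Finset.sum_range_zero]
    simp [cf_mul, cf_one, Finset.sum_range_succ, hD00, hD10, hD01, hD20, hD11, hD02, hD30, hD21, hD12, hD03, hDD00, hDD10, hDD01, hDD20, hDD11, hDD02, hDD30, hDD21, hDD12, hDD03, hD300, hD310, hD301, hD320, hD311, hD302, hD330, hD321, hD312, hD303, hE00, hE10, hE01, hE20, hE11, hE02, hE30, hE21, hE12, hE03, hEE00, hEE10, hEE01, hEE20, hEE11, hEE02, hE300, hE310, hE301, hE320, hE311, hE302, hg00, hg10, hg01, hg20, hg11, hg02]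
    try ring
  have hU20 : cf (MvPowerSeries.substSeries ![fDiff F ι, fDiffSwap F ι] g) 2 0 = a₂₂ - a₁₁*a₁₂ - 2*a₁₃ := by
    rw [cf_subst]
    simp only [Finset.sum_range_succ, Finset.sum_range_zero]
    simp [cf_mul, cf_one, Finset.sum_range_succ, hD00, hD10, hD01, hD20, hD11, hD02, hD30, hD21, hD12, hD03, hDD00, hDD10, hDD01, hDD20, hDD11, hDD02, hDD30, hDD21, hDD12, hDD03, hD300, hD310, hD301, hD320, hD311, hD302, hD330, hD321, hD312, hD303, hE00, hE10, hE01, hE20, hE11, hE02, hE30, hE21, hE12, hE03, hEE00, hEE10, hEE01, hEE20, hEE11, hEE02, hE300, hE310, hE301, hE320, hE311, hE302, hg00, hg10, hg01, hg20, hg11, hg02]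
    try ring
  have hU11 : cf (MvPowerSeries.substSeries ![fDiff F ι, fDiffSwap F ι] g) 1 1 = -(2*(a₂₂ - a₁₁*a₁₂ - 2*a₁₃)) := by
    rw [cf_subst]
    simp only [Finset.sum_range_succ, Finset.sum_range_zero]
    simp [cf_mul, cf_one, Finset.sum_range_succ, hD00, hD10, hD01, hD20, hD11, hD02, hD30, hD21, hD12, hD03, hDD00, hDD10, hDD01, hDD20, hDD11, hDD02, hDD30, hDD21, hDD12, hDD03, hD300, hD310, hD301, hD320, hD311, hD302, hD330, hD321, hD312, hD303, hE00, hE10, hE01, hE20, hE11, hE02, hE30, hE21, hE12, hE03, hEE00, hEE10, hEE01, hEE20, hEE11, hEE02, hE300, hE310, hE301, hE320, hE311, hE302, hg00, hg10, hg01, hg20, hg11, hg02]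
    try ring
  have hU02 : cf (MvPowerSeries.substSeries ![fDiff F ι, fDiffSwap F ι] g) 0 2 = a₂₂ - a₁₁*a₁₂ - 2*a₁₃ := by
    rw [cf_subst]
    simp only [Finset.sum_range_succ, Finset.sum_range_zero]
    simp [cf_mul, cf_one, Finset.sum_range_succ, hD00, hD10, hD01, hD20, hD11, hD02, hD30, hD21, hD12, hD03, hDD00, hDD10, hDD01, hDD20, hDD11, hDD02, hDD30, hDD21, hDD12, hDD03, hD300, hD310, hD301, hD320, hD311, hD302, hD330, hD321, hD312, hD303, hE00, hE10, hE01, hE20, hE11, hE02, hE30, hE21, hE12, hE03, hEE00, hEE10, hEE01, hEE20, hEE11, hEE02, hE300, hE310, hE301, hE320, hE311, hE302, hg00, hg10, hg01, hg20, hg11, hg02]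
    try ring
  intro d hd
  rw [fin2_eq d, cf_def, cf_def]
  generalize hgi : d 0 = i at hd ⊢
  generalize hgj : d 1 = j at hd ⊢
  have hi4 : i < 4 := by omega
  have hj4 : j < 4 := by omega
  interval_cases i <;> interval_cases j <;>
    first
    | exact absurd hd (by omega)
    | (simp only [cf_add, cf_sub, cf_X1_mul, cf_X0_mul, cf_C_mul, mul_assoc, two_mul,
        cf_X0, cf_X1, cf_one,
        hT00, hT10, hT01, hT20, hT11, hT02, hT30, hT21, hT12, hT03,
        hU00, hU10, hU01, hU20, hU11, hU02]
       norm_num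
       try ring)
end
end
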